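/- arXiv:1409.2445 — 5 statements merged into one kernel-verified Lean document; each statement's English description precedes it below -/
import Mathlib

section
/- Let P be a finite poset. Then the poset T(P) of strictly order-reversing maps has a unique minimal element if and only if P is pure (all maximal chains of P have the same length). (This is the combinatorial content of Hibi's theorem that the Hibi ring R[L] of L = I(P) is Gorenstein if and only if P is pure, since minimal generators of the canonical module of R[L] correspond bijectively to minimal elements of T(P).) -/
open Classical

/-- `Hat P` is the poset `P` with a new least element `-∞ = ⊥` and a new
greatest element `∞ = ⊤` adjoined. -/
abbrev Hat (P : Type*) := WithBot (WithTop P)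

/-- The canonical inclusion of `P` into `Hat P`. -/
def toHat {P : Type*} (x : P) : Hat P := ((x : WithTop P) : WithBot (WithTop P))

/-- The rank of a poset: the maximal length (number of covering steps) of a
chain, encoded as the maximal `n` admitting a strictly increasing sequence of
`n + 1` elements. -/
noncomputable def rankN (Q : Type*) [Preorder Q] : ℕ :=
  sSup {n : ℕ | ∃ f : Fin (n + 1) → Q, StrictMono f}

/-- The height of `x` in a poset `Q`: the rank of the subposet `{y | y ≤ x}`. -/
noncomputable def heightN {Q : Type*} [Preorder Q] (x : Q) : ℕ :=
  sSup {n : ℕ | ∃ f : Fin (n + 1) → Q, StrictMono f ∧ ∀ i, f i ≤ x}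

/-- The depth of `x` in a poset `Q`: the rank of the subposet `{y | x ≤ y}`. -/
noncomputable def depthN {Q : Type*} [Preorder Q] (x : Q) : ℕ :=
  sSup {n : ℕ | ∃ f : Fin (n + 1) → Q, StrictMono f ∧ ∀ i, x ≤ f i}

/-- `v` belongs to `S(P)`: `v : Hat P → ℕ` is order-reversing with `v ∞ = 0`. -/
def memS (P : Type*) [PartialOrder P] (v : Hat P → ℕ) : Prop :=
  v ⊤ = 0 ∧ ∀ p q : Hat P, p ≤ q → v q ≤ v p

/-- `v` belongs to `T(P)`: `v : Hat P → ℕ` is strictly order-reversing with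
`v ∞ = 0`. -/
def memT (P : Type*) [PartialOrder P] (v : Hat P → ℕ) : Prop :=
  v ⊤ = 0 ∧ ∀ p q : Hat P, p < q → v q < v p

/-- The partial order of `T(P)`: `v ≥ w` iff `v` dominates `w` pointwise and the
pointwise difference `v - w` is order-reversing. -/
def Tge (P : Type*) [PartialOrder P] (v w : Hat P → ℕ) : Prop :=
  (∀ p : Hat P, w p ≤ v p) ∧ ∀ p q : Hat P, p ≤ q → v q - w q ≤ v p - w p

/-- `v` is a minimal element of the poset `T(P)`. -/
def IsMinT (P : Type*) [PartialOrder P] (v : Hat P → ℕ) : Prop :=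
  memT P v ∧ ∀ w : Hat P → ℕ, memT P w → Tge P v w → w = v

/-- A poset is pure if all its maximal chains have the same length, equivalently
the same cardinality. -/
def IsPure (P : Type*) [PartialOrder P] : Prop :=
  ∀ C D : Set P, IsMaxChain (· ≤ ·) C → IsMaxChain (· ≤ ·) D → C.ncard = D.ncard

/-! ### Auxiliary development for Hibi's criterion -/

section HibiAux

open Set

variable {P : Type*} [Fintype P] [PartialOrder P]

/-- Series of covering relations in `Hat P`. -/
private abbrev CovS (P : Type*) [PartialOrder P] :=
  RelSeries {x : Hat P × Hat P | x.1 ⋖ x.2}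

private noncomputable instance : Fintype (Hat P) :=
  Fintype.ofEquiv (Option (Option P)) (Equiv.refl _)

private lemma covS_strictMono (c : CovS P) : StrictMono c.toFun :=
  LTSeries.strictMono (c.ofLE (fun _ h => h.lt))

private lemma covS_head_eq_last_of_len0 (c : CovS P) (h : c.length = 0) :
    c.head = c.last := by
  show c.toFun 0 = c.toFun (Fin.last _)
  congr 1
  ext
  simp [h]

/-- Telescoping a strictly decreasing function along a covering series. -/
private lemma covs_drop {g : Hat P → ℕ} (hg : ∀ a b : Hat P, a ⋖ b → g b + 1 ≤ g a) :
    ∀ (n : ℕ) (c : CovS P), c.length = n → g c.last + c.length ≤ g c.head := by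
  intro n
  induction n with
  | zero =>
    intro c hc
    rw [covS_head_eq_last_of_len0 c hc, hc]
    omega
  | succ m ih =>
    intro c hc
    have h1 := hg c.eraseLast.last c.last (c.eraseLast_last_rel_last (by omega))
    have h2 := ih c.eraseLast (by show c.length - 1 = m; omega)
    rw [RelSeries.head_eraseLast] at h2
    have h3 : c.eraseLast.length = m := by show c.length - 1 = m; omega
    omega

/-- Telescoping an exact rank-type function along a covering series. -/
private lemma covs_exact {g : Hat P → ℕ} (hg : ∀ a b : Hat P, a ⋖ b → g a = g b + 1) :
    ∀ (n : ℕ) (c : CovS P), c.length = n → g c.head = g c.last + c.length := by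
  intro n
  induction n with
  | zero =>
    intro c hc
    rw [covS_head_eq_last_of_len0 c hc, hc]
    omega
  | succ m ih =>
    intro c hc
    have h1 := hg c.eraseLast.last c.last (c.eraseLast_last_rel_last (by omega))
    have h2 := ih c.eraseLast (by show c.length - 1 = m; omega)
    rw [RelSeries.head_eraseLast] at h2
    have h3 : c.eraseLast.length = m := by show c.length - 1 = m; omega
    omega

private lemma depth_bddAbove (x : Hat P) :
    BddAbove {n : ℕ | ∃ f : Fin (n + 1) → Hat P, StrictMono f ∧ ∀ i, x ≤ f i} := by
  refine ⟨Fintype.card (Hat P), fun n hn => ?_⟩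
  obtain ⟨f, hf, -⟩ := hn
  have := Fintype.card_le_of_injective f hf.injective
  simp only [Fintype.card_fin] at this
  omega

private lemma depth_nonempty (x : Hat P) :
    Set.Nonempty {n : ℕ | ∃ f : Fin (n + 1) → Hat P, StrictMono f ∧ ∀ i, x ≤ f i} := by
  refine ⟨0, fun _ => x, ?_, fun _ => le_rfl⟩
  intro i j hij
  rw [Fin.lt_def] at hij
  have := i.isLt
  have := j.isLt
  omega

private lemma depthN_spec (x : Hat P) :
    ∃ f : Fin (depthN x + 1) → Hat P, StrictMono f ∧ ∀ i, x ≤ f i :=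
  Nat.sSup_mem (depth_nonempty x) (depth_bddAbove x)

private lemma le_depthN_of_series (c : LTSeries (Hat P)) : c.length ≤ depthN c.head :=
  le_csSup (depth_bddAbove _)
    ⟨c.toFun, LTSeries.strictMono c, fun i => (LTSeries.strictMono c).monotone (Fin.zero_le i)⟩

private lemma depthN_anti {x y : Hat P} (h : x ≤ y) : depthN y ≤ depthN x := by
  refine csSup_le (depth_nonempty y) (fun n hn => le_csSup (depth_bddAbove x) ?_)
  obtain ⟨f, hf, hge⟩ := hn
  exact ⟨f, hf, fun i => h.trans (hge i)⟩

private lemma depthN_lt_of_lt {x y : Hat P} (h : x < y) : depthN y < depthN x := by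
  obtain ⟨f, hf, hge⟩ := depthN_spec y
  set c : LTSeries (Hat P) := ⟨depthN y, f, fun i => hf (Fin.castSucc_lt_succ (i := i))⟩ with hc
  have hxc : x < c.head := lt_of_lt_of_le h (hge 0)
  have := le_depthN_of_series (c.cons x hxc)
  rw [RelSeries.head_cons] at this
  have hlen : (c.cons x hxc).length = depthN y + 1 := by
    show 0 + c.length + 1 = depthN y + 1
    simp [hc]
  omega

private lemma depthN_top : depthN (⊤ : Hat P) = 0 := by
  refine Nat.le_zero.mp (csSup_le (depth_nonempty ⊤) ?_)
  rintro n ⟨f, hf, hge⟩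
  by_contra hn
  have h01 : (⟨0, by omega⟩ : Fin (n + 1)) < ⟨1, by omega⟩ := by
    simp [Fin.lt_def]
  have := hf h01
  have e0 : f ⟨0, by omega⟩ = ⊤ := top_le_iff.mp (hge _)
  have e1 : f ⟨1, by omega⟩ = ⊤ := top_le_iff.mp (hge _)
  rw [e0, e1] at this
  exact lt_irrefl _ this

private lemma depthN_pos {x : Hat P} (h : x < ⊤) : 1 ≤ depthN x := by
  refine le_csSup (depth_bddAbove x) ⟨fun i => if i.1 = 0 then x else ⊤, ?_, ?_⟩
  · intro i j hij
    have hij' : i.1 < j.1 := hij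
    have hj : j.1 = 1 := by omega
    have hi : i.1 = 0 := by omega
    simp [hi, hj, h]
  · intro i
    by_cases hi : i.1 = 0 <;> simp [hi]

/-- Existence of a saturated chain from `x` to `⊤` of length `depthN x`. -/
private lemma depth_series (x : Hat P) :
    ∃ c : CovS P, c.head = x ∧ c.last = ⊤ ∧ c.length = depthN x := by
  generalize hn : depthN x = n
  induction n using Nat.strong_induction_on generalizing x with
  | _ n ih =>
    rcases Nat.eq_zero_or_pos n with h0 | hpos
    · subst h0
      have hx : x = ⊤ := by
        by_contra hne
        have := depthN_pos (lt_of_le_of_ne le_top hne)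
        omega
      subst hx
      exact ⟨RelSeries.singleton _ ⊤, rfl, rfl, by simpa using hn.symm⟩
    · obtain ⟨m, rfl⟩ : ∃ m, n = m + 1 := ⟨n - 1, by omega⟩
      have hspec := depthN_spec x
      rw [hn] at hspec
      obtain ⟨f, hf, hge⟩ := hspec
      -- f 0 = x
      have hf0 : f 0 = x := by
        by_contra hne
        have hlt : x < f 0 := lt_of_le_of_ne (hge 0) (Ne.symm hne)
        have h1 : depthN (f 0) < depthN x := depthN_lt_of_lt hlt
        set c : LTSeries (Hat P) := ⟨m + 1, f, fun i => hf (Fin.castSucc_lt_succ (i := i))⟩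
        have hle := le_depthN_of_series c
        have e1 : c.head = f 0 := rfl
        have e2 : c.length = m + 1 := rfl
        rw [e1, e2] at hle
        rw [hn] at h1
        omega
      -- y := f 1 has depthN y = m
      set y : Hat P := f ⟨1, by omega⟩ with hy
      have hxy : x < y := by
        rw [← hf0]
        exact hf (by simp [Fin.lt_def])
      have hym : m ≤ depthN y := by
        set g : Fin (m + 1) → Hat P := fun i => f i.succ with hg
        set c : LTSeries (Hat P) :=
          ⟨m, g, fun i => hf (by exact Fin.succ_lt_succ_iff.mpr (Fin.castSucc_lt_succ (i := i)))⟩ with hc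
        have hch : c.head = y := by
          show f (0 : Fin (m + 1)).succ = y
          congr 1
        have := le_depthN_of_series c
        rwa [hch] at this
      have hym' : depthN y = m := by
        have := depthN_lt_of_lt hxy
        rw [hn] at this
        omega
      -- z : minimal in {z | x < z ∧ z ≤ y}
      obtain ⟨z, ⟨hxz, hzy⟩, hzmin⟩ :=
        Set.Finite.exists_maximalFor (OrderDual.toDual : Hat P → (Hat P)ᵒᵈ)
          {z | x < z ∧ z ≤ y} (Set.toFinite _) ⟨y, hxy, le_rfl⟩
      have hcov : x ⋖ z := by
        refine ⟨hxz, fun w hw1 hw2 => ?_⟩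
        have hwmem : w ∈ {z | x < z ∧ z ≤ y} := ⟨hw1, hw2.le.trans hzy⟩
        have := hzmin hwmem (by exact OrderDual.toDual_le_toDual.mpr hw2.le)
        exact absurd (OrderDual.toDual_le_toDual.mp this) hw2.not_ge
      have hzm : depthN z = m := by
        have h1 := depthN_anti hzy
        have h2 := depthN_lt_of_lt hxz
        rw [hn] at h2
        omega
      obtain ⟨c, hch, hcl, hclen⟩ := ih m (by omega) z hzm
      refine ⟨c.cons x (hch ▸ hcov), by simp, by simp [hcl], ?_⟩
      show 0 + c.length + 1 = m + 1
      omega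

private lemma memT_dep : memT P (fun x => depthN x) :=
  ⟨depthN_top, fun _ _ h => depthN_lt_of_lt h⟩

private lemma dep_le_of_memT {v : Hat P → ℕ} (hv : memT P v) (x : Hat P) :
    depthN x ≤ v x := by
  obtain ⟨c, hch, hcl, hclen⟩ := depth_series x
  have := covs_drop (fun a b hab => hv.2 a b hab.lt) c.length c rfl
  rw [hch, hcl, hv.1, hclen] at this
  omega

private lemma isMinT_dep : IsMinT P (fun x => depthN x) := by
  refine ⟨memT_dep, ?_⟩
  intro w hw hge
  by_contra hne
  have hDne : {p : Hat P | w p < depthN p}.Nonempty := by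
    obtain ⟨x, hx⟩ := Function.ne_iff.mp hne
    exact ⟨x, lt_of_le_of_ne (hge.1 x) hx⟩
  obtain ⟨p, hpD, hpmax⟩ :=
    Set.Finite.exists_maximalFor id {p : Hat P | w p < depthN p} (Set.toFinite _) hDne
  have hpt : p ≠ ⊤ := by
    intro h
    rw [h] at hpD
    have : w ⊤ < depthN (⊤ : Hat P) := hpD
    rw [hw.1, depthN_top] at this
    omega
  have hdp : 1 ≤ depthN p := depthN_pos (lt_of_le_of_ne le_top hpt)
  obtain ⟨c, hch, hcl, hclen⟩ := depth_series p
  have hc0 : c.length ≠ 0 := by omega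
  set q : Hat P := (c.tail hc0).head with hq
  have hpq : p < q := by
    rw [hq, RelSeries.head_tail]
    have : c.toFun 0 < c.toFun 1 := by
      apply covS_strictMono
      rw [Fin.lt_def]
      simp [Fin.val_one', Nat.mod_eq_of_lt (by omega : 1 < c.length + 1)]
    rwa [← hch]
  have hqdep : depthN p - 1 ≤ depthN q := by
    have h1 : (c.tail hc0).length ≤ depthN q := by
      have := le_depthN_of_series ((c.tail hc0).ofLE (fun _ h => h.lt))
      exact this
    have h2 : (c.tail hc0).length = c.length - 1 := rfl
    omega
  have hqdep' : depthN q = depthN p - 1 := by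
    have := depthN_lt_of_lt hpq
    omega
  have hqnD : q ∉ {p : Hat P | w p < depthN p} := by
    intro hqD
    exact absurd (hpmax hqD hpq.le) hpq.not_ge
  have hwq : w q = depthN q := le_antisymm (hge.1 q) (not_lt.mp hqnD)
  have := hw.2 p q hpq
  have hpD' : w p < depthN p := hpD
  omega

private lemma tge_refl (v : Hat P → ℕ) : Tge P v v :=
  ⟨fun _ => le_rfl, fun _ _ _ => by omega⟩

private lemma tge_trans {u w m : Hat P → ℕ} (h1 : Tge P u w) (h2 : Tge P w m) :
    Tge P u m := by
  refine ⟨fun p => (h2.1 p).trans (h1.1 p), fun p q hpq => ?_⟩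
  have a1 := h1.2 p q hpq
  have a2 := h2.2 p q hpq
  have b1 := h1.1 p
  have b2 := h1.1 q
  have c1 := h2.1 p
  have c2 := h2.1 q
  omega

/-- If the minimal element is unique, every element of `T(P)` dominates `depthN`. -/
private lemma tge_dep_of_unique (huniq : ∃! v : Hat P → ℕ, IsMinT P v) :
    ∀ u : Hat P → ℕ, memT P u → Tge P u (fun x => depthN x) := by
  obtain ⟨v₀, hv₀, hu⟩ := huniq
  have hdep : (fun x : Hat P => depthN x) = v₀ := hu _ isMinT_dep
  have key : ∀ N : ℕ, ∀ u : Hat P → ℕ, memT P u → (∑ x : Hat P, u x) < N →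
      Tge P u (fun x => depthN x) := by
    intro N
    induction N with
    | zero => intro u _ h; omega
    | succ M ih =>
      intro u hu' hsum
      by_cases hm : IsMinT P u
      · have h1 : u = v₀ := hu u hm
        rw [hdep, h1]
        exact tge_refl v₀
      · have hex : ∃ w, memT P w ∧ Tge P u w ∧ w ≠ u := by
          by_contra hc
          push_neg at hc
          exact hm ⟨hu', fun w hw hge => hc w hw hge⟩
        obtain ⟨w, hw, hge, hne⟩ := hex
        have hlt : ∑ x : Hat P, w x < ∑ x : Hat P, u x := by
          obtain ⟨x, hx⟩ := Function.ne_iff.mp hne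
          exact Finset.sum_lt_sum (fun i _ => hge.1 i)
            ⟨x, Finset.mem_univ x, lt_of_le_of_ne (hge.1 x) hx⟩
        exact tge_trans hge (ih w hw (by omega))
  exact fun u hu' => key (∑ x : Hat P, u x + 1) u hu' (by omega)

/-- Maximal length of a chain from `y` to `z`. -/
private noncomputable def chLen (y z : Hat P) : ℕ :=
  sSup {n : ℕ | ∃ c : LTSeries (Hat P), c.length = n ∧ c.head = y ∧ c.last = z}

private lemma chLen_bdd (y z : Hat P) :
    BddAbove {n : ℕ | ∃ c : LTSeries (Hat P), c.length = n ∧ c.head = y ∧ c.last = z} := by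
  refine ⟨Fintype.card (Hat P), ?_⟩
  rintro n ⟨c, rfl, -, -⟩
  have := Fintype.card_le_of_injective c.toFun (LTSeries.strictMono c).injective
  simp only [Fintype.card_fin] at this
  omega

private lemma chLen_set_nonempty {y z : Hat P} (h : y ≤ z) :
    Set.Nonempty {n : ℕ | ∃ c : LTSeries (Hat P), c.length = n ∧ c.head = y ∧ c.last = z} := by
  rcases eq_or_lt_of_le h with rfl | hlt
  · exact ⟨0, RelSeries.singleton _ y, rfl, rfl, rfl⟩
  · exact ⟨1, (RelSeries.singleton _ y).snoc z hlt, rfl,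
      by exact (RelSeries.head_snoc _ _ _).trans (RelSeries.head_singleton y),
      by exact RelSeries.last_snoc _ _ _⟩

private lemma chLen_self (q : Hat P) : chLen q q = 0 := by
  refine Nat.le_zero.mp (csSup_le (chLen_set_nonempty le_rfl) ?_)
  rintro n ⟨c, rfl, hh, hl⟩
  by_contra hn
  have : c.head < c.last := LTSeries.strictMono c (by rw [Fin.lt_def]; simpa using by omega)
  rw [hh, hl] at this
  exact lt_irrefl _ this

private lemma chLen_mem {y z : Hat P} (h : y ≤ z) :
    ∃ c : LTSeries (Hat P), c.length = chLen y z ∧ c.head = y ∧ c.last = z :=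
  Nat.sSup_mem (chLen_set_nonempty h) (chLen_bdd y z)

private lemma chLen_cons {x y z : Hat P} (hxy : x < y) (hyz : y ≤ z) :
    chLen y z + 1 ≤ chLen x z := by
  obtain ⟨c, hclen, hch, hcl⟩ := chLen_mem hyz
  refine le_csSup (chLen_bdd x z) ⟨c.cons x (hch ▸ hxy), ?_, by simp, by simp [hcl]⟩
  show 0 + c.length + 1 = chLen y z + 1
  omega

private lemma chLen_cov_le {p q : Hat P} (hcov : p ⋖ q) : chLen p q ≤ 1 := by
  refine csSup_le (chLen_set_nonempty hcov.lt.le) ?_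
  rintro n ⟨c, rfl, hh, hl⟩
  by_contra hn
  push_neg at hn
  have h01 : (⟨0, by omega⟩ : Fin (c.length + 1)) < ⟨1, by omega⟩ := by simp [Fin.lt_def]
  have h1l : (⟨1, by omega⟩ : Fin (c.length + 1)) < Fin.last c.length := by
    simp [Fin.lt_def]
    omega
  have hm1 : p < c.toFun ⟨1, by omega⟩ := by
    have := LTSeries.strictMono c h01
    have hh' : c.toFun ⟨0, by omega⟩ = p := hh
    rwa [hh'] at this
  have hm2 : c.toFun ⟨1, by omega⟩ < q := by
    have := LTSeries.strictMono c h1l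
    have hl' : c.toFun (Fin.last c.length) = q := hl
    rwa [hl'] at this
  exact hcov.2 hm1 hm2

private lemma cov_top_depth {p : Hat P} (hcov : p ⋖ (⊤ : Hat P)) : depthN p = 1 := by
  have h1 := depthN_pos hcov.lt
  by_contra hne
  have h2 : 2 ≤ depthN p := by omega
  obtain ⟨c, hch, hcl, hclen⟩ := depth_series p
  have h01 : (⟨0, by omega⟩ : Fin (c.length + 1)) < ⟨1, by omega⟩ := by simp [Fin.lt_def]
  have h1l : (⟨1, by omega⟩ : Fin (c.length + 1)) < Fin.last c.length := by
    simp [Fin.lt_def]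
    omega
  have hm1 : p < c.toFun ⟨1, by omega⟩ := by
    have := covS_strictMono c h01
    have hh' : c.toFun ⟨0, by omega⟩ = p := hch
    rwa [hh'] at this
  have hm2 : c.toFun ⟨1, by omega⟩ < ⊤ := by
    have := covS_strictMono c h1l
    have hl' : c.toFun (Fin.last c.length) = ⊤ := hcl
    rwa [hl'] at this
  exact hcov.2 hm1 hm2

/-- With a unique minimal element, every covering relation drops depth by exactly one. -/
private lemma cov_dep_le (huniq : ∃! v : Hat P → ℕ, IsMinT P v) :
    ∀ p q : Hat P, p ⋖ q → depthN p ≤ depthN q + 1 := by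
  intro p q hcov
  by_contra hcon
  push_neg at hcon
  have h2 : depthN q + 2 ≤ depthN p := hcon
  set D : Set (Hat P) := {y | y ≤ q ∧ depthN y ≤ chLen y q + depthN q} with hD
  have hqD : q ∈ D := ⟨le_rfl, by rw [chLen_self]; omega⟩
  have hpD : p ∉ D := by
    rintro ⟨-, hle⟩
    have := chLen_cov_le hcov
    omega
  have hqt : q ≠ ⊤ := by
    intro h
    rw [h] at hcov h2
    have := cov_top_depth hcov
    rw [depthN_top] at h2
    omega
  have htD : (⊤ : Hat P) ∉ D := fun h => hqt (top_le_iff.mp h.1)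
  have hkey : ∀ x y : Hat P, x < y → y ∈ D → x ∉ D → depthN y + 2 ≤ depthN x := by
    intro x y hxy hyD hxD
    obtain ⟨hyq, hydep⟩ := hyD
    have hxq : x ≤ q := hxy.le.trans hyq
    have hxdep : chLen x q + depthN q + 1 ≤ depthN x := by
      by_contra hc
      exact hxD ⟨hxq, by omega⟩
    have := chLen_cons hxy hyq
    omega
  set u : Hat P → ℕ := fun x => depthN x + (if x ∈ D then 1 else 0) with hu
  have humem : memT P u := by
    constructor
    · show depthN (⊤ : Hat P) + _ = 0
      simp only [if_neg htD, depthN_top]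
    · intro a b hab
      have hd := depthN_lt_of_lt hab
      show depthN b + _ < depthN a + _
      by_cases hbD : b ∈ D
      · by_cases haD : a ∈ D
        · rw [if_pos hbD, if_pos haD]; omega
        · have := hkey a b hab hbD haD
          rw [if_pos hbD, if_neg haD]; omega
      · rw [if_neg hbD]
        by_cases haD : a ∈ D
        · rw [if_pos haD]; omega
        · rw [if_neg haD]; omega
  have htge := tge_dep_of_unique huniq u humem
  have := htge.2 p q hcov.lt.le
  simp only [hu] at this
  rw [if_pos hqD, if_neg hpD] at this
  omega

/-- Existence of a saturated chain between any two comparable elements. -/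
private lemma exists_covs_aux :
    ∀ (k : ℕ) (x y : Hat P), x ≤ y → ({w | x ≤ w ∧ w < y}).ncard < k →
      ∃ c : CovS P, c.head = x ∧ c.last = y := by
  intro k
  induction k with
  | zero => intro x y _ h; omega
  | succ m ih =>
    intro x y hxy hcard
    rcases eq_or_lt_of_le hxy with rfl | hlt
    · exact ⟨RelSeries.singleton _ x, rfl, rfl⟩
    · have hne : {w | x ≤ w ∧ w < y}.Nonempty := ⟨x, le_rfl, hlt⟩
      obtain ⟨w, ⟨hxw, hwy⟩, hmax⟩ :=
        Set.Finite.exists_maximalFor id {w | x ≤ w ∧ w < y} (Set.toFinite _) hne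
      have hcov : w ⋖ y := by
        refine ⟨hwy, fun z hz1 hz2 => ?_⟩
        have hzmem : z ∈ {w | x ≤ w ∧ w < y} := ⟨hxw.trans hz1.le, hz2⟩
        exact absurd (hmax hzmem hz1.le) hz1.not_ge
      have hss : {v | x ≤ v ∧ v < w} ⊂ {w | x ≤ w ∧ w < y} := by
        constructor
        · rintro v ⟨h1, h2⟩
          exact ⟨h1, h2.trans hwy⟩
        · intro hsub
          have : w ∈ {v | x ≤ v ∧ v < w} := hsub ⟨hxw, hwy⟩
          exact lt_irrefl w this.2
      have hlt' : ({v | x ≤ v ∧ v < w}).ncard < ({w | x ≤ w ∧ w < y}).ncard :=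
        Set.ncard_lt_ncard hss (Set.toFinite _)
      obtain ⟨c, hch, hcl⟩ := ih x w hxw (by omega)
      exact ⟨c.snoc y (hcl ▸ hcov), by simp [hch], by simp⟩

private lemma exists_covs {x y : Hat P} (h : x ≤ y) :
    ∃ c : CovS P, c.head = x ∧ c.last = y :=
  exists_covs_aux (({w | x ≤ w ∧ w < y}).ncard + 1) x y h (by omega)

/-! ### Bridging maximal chains and covering series -/

private lemma toHat_le {x y : P} : toHat x ≤ toHat y ↔ x ≤ y := by
  simp [toHat]

private lemma toHat_injective : Function.Injective (toHat : P → Hat P) := by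
  intro x y h
  simpa [toHat] using h

private lemma toHat_ne_bot (x : P) : toHat x ≠ (⊥ : Hat P) := by
  simp [toHat]

private lemma toHat_ne_top (x : P) : toHat x ≠ (⊤ : Hat P) := by
  simp only [toHat]
  intro h
  have : ((x : WithTop P) : WithBot (WithTop P)) = ((⊤ : WithTop P) : WithBot (WithTop P)) := h
  have := WithBot.coe_injective this
  simp at this

private lemma bot_ne_top_hat : (⊥ : Hat P) ≠ (⊤ : Hat P) := by
  intro h
  have : ((⊤ : WithTop P) : WithBot (WithTop P)) = ⊥ := h.symm
  simp at this

/-- Case analysis on `Hat P`. -/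
private lemma hat_cases (z : Hat P) : z = ⊥ ∨ z = ⊤ ∨ ∃ x : P, z = toHat x := by
  induction z using WithBot.recBotCoe with
  | bot => exact Or.inl rfl
  | coe w =>
    induction w using WithTop.recTopCoe with
    | top => exact Or.inr (Or.inl rfl)
    | coe x => exact Or.inr (Or.inr ⟨x, rfl⟩)

/-- The range of a full covering series is a maximal chain of `Hat P`. -/
private lemma full_series_maxchain (c : CovS P) (hh : c.head = ⊥) (hl : c.last = ⊤) :
    IsMaxChain (· ≤ ·) (Set.range c.toFun) ∧
      (Set.range c.toFun).ncard = c.length + 1 := by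
  have hmono := covS_strictMono c
  have hchain : IsChain (· ≤ ·) (Set.range c.toFun) := by
    rintro a ⟨i, rfl⟩ b ⟨j, rfl⟩ hne
    rcases lt_trichotomy i j with h | h | h
    · exact Or.inl (hmono.monotone h.le)
    · exact absurd (congrArg c.toFun h) hne
    · exact Or.inr (hmono.monotone h.le)
  refine ⟨⟨hchain, ?_⟩, ?_⟩
  · intro s hs hsub
    refine Set.Subset.antisymm hsub (fun z hz => ?_)
    by_contra hznr
    -- maximal index i with c i ≤ z
    have hcomp : ∀ j : Fin (c.length + 1), z ≤ c.toFun j ∨ c.toFun j ≤ z := by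
      intro j
      have hne : z ≠ c.toFun j := fun h => hznr (h ▸ Set.mem_range_self j)
      exact hs hz (hsub (Set.mem_range_self j)) hne
    set I : Finset (Fin (c.length + 1)) :=
      Finset.univ.filter (fun i => c.toFun i ≤ z) with hI
    have hIne : I.Nonempty := by
      refine ⟨0, ?_⟩
      simp only [hI, Finset.mem_filter, Finset.mem_univ, true_and]
      show c.head ≤ z
      rw [hh]
      exact bot_le
    set i := I.max' hIne with hi
    have hiI : i ∈ I := I.max'_mem hIne
    have hile : c.toFun i ≤ z := by
      simpa [hI] using hiI
    have hilast : i ≠ Fin.last c.length := by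
      intro h
      have : c.toFun i = ⊤ := by rw [h]; exact hl
      rw [this] at hile
      exact hznr (top_le_iff.mp hile ▸ (by rw [← this, h]; exact Set.mem_range_self _))
    have hival : i.1 < c.length := by
      rcases lt_or_eq_of_le (Nat.lt_succ_iff.mp i.2) with h | h
      · exact h
      · exact absurd (Fin.ext h) hilast
    set i' : Fin (c.length + 1) := ⟨i.1 + 1, by omega⟩ with hi'
    have hi'nI : i' ∉ I := by
      intro h
      have := I.le_max' i' h
      rw [← hi] at this
      have : i'.1 ≤ i.1 := this
      simp [hi'] at this
    have hi'z : ¬(c.toFun i' ≤ z) := by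
      intro h
      exact hi'nI (by simp [hI, h])
    have hzi' : z < c.toFun i' := by
      rcases hcomp i' with h | h
      · exact lt_of_le_of_ne h (fun he => hznr (he ▸ Set.mem_range_self i'))
      · exact absurd h hi'z
    have hiz : c.toFun i < z :=
      lt_of_le_of_ne hile (fun he => hznr (he ▸ Set.mem_range_self i))
    have hstep := c.step ⟨i.1, hival⟩
    have hcs : (⟨i.1, hival⟩ : Fin c.length).castSucc = i := by
      ext; rfl
    have hsucc : (⟨i.1, hival⟩ : Fin c.length).succ = i' := by
      ext; rfl
    rw [hcs, hsucc] at hstep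
    exact hstep.2 hiz hzi'
  · rw [← Set.image_univ, Set.ncard_image_of_injective _ hmono.injective,
      Set.ncard_univ, Nat.card_eq_fintype_card, Fintype.card_fin]

/-- From a maximal chain of `Hat P`, extract the corresponding maximal chain of `P`. -/
private lemma maxchain_down (M : Set (Hat P)) (hM : IsMaxChain (· ≤ ·) M) :
    ∃ C : Set P, IsMaxChain (· ≤ ·) C ∧ M.ncard = C.ncard + 2 := by
  have hbot : (⊥ : Hat P) ∈ M := hM.bot_mem
  have htop : (⊤ : Hat P) ∈ M := hM.top_mem
  set C : Set P := {x | toHat x ∈ M} with hC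
  have hMeq : M = insert ⊥ (insert ⊤ (toHat '' C)) := by
    ext z
    constructor
    · intro hz
      rcases hat_cases z with rfl | rfl | ⟨x, rfl⟩
      · exact Set.mem_insert _ _
      · exact Set.mem_insert_of_mem _ (Set.mem_insert _ _)
      · exact Set.mem_insert_of_mem _ (Set.mem_insert_of_mem _ ⟨x, hz, rfl⟩)
    · intro hz
      rcases hz with rfl | rfl | ⟨x, hx, rfl⟩
      · exact hbot
      · exact htop
      · exact hx
  refine ⟨C, ⟨?_, ?_⟩, ?_⟩
  · intro x hx y hy hne
    have := hM.1 hx hy (fun h => hne (toHat_injective h))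
    rcases this with h | h
    · exact Or.inl (toHat_le.mp h)
    · exact Or.inr (toHat_le.mp h)
  · intro s hs hsub
    refine Set.Subset.antisymm hsub (fun z hz => ?_)
    have hins : IsChain (· ≤ ·) (insert (toHat z) M) := by
      refine hM.1.insert (fun b hb hne => ?_)
      rcases hat_cases b with rfl | rfl | ⟨x, rfl⟩
      · exact Or.inr bot_le
      · exact Or.inl le_top
      · have hxC : x ∈ C := hb
        by_cases hzx : z = x
        · exact absurd (congrArg toHat hzx) hne
        · rcases hs hz (hsub hxC) hzx with h | h
          · exact Or.inl (toHat_le.mpr h)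
          · exact Or.inr (toHat_le.mpr h)
    have := hM.2 hins (Set.subset_insert _ _)
    have hzM : toHat z ∈ M := by
      rw [this]
      exact Set.mem_insert _ _
    exact hzM
  · rw [hMeq]
    have h1 : (⊥ : Hat P) ∉ insert ⊤ (toHat '' C) := by
      rintro (h | ⟨x, -, hx⟩)
      · exact bot_ne_top_hat h
      · exact toHat_ne_bot x hx
    have h2 : (⊤ : Hat P) ∉ toHat '' C := by
      rintro ⟨x, -, hx⟩
      exact toHat_ne_top x hx
    rw [Set.ncard_insert_of_notMem h1 (Set.toFinite _),
      Set.ncard_insert_of_notMem h2 (Set.toFinite _),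
      Set.ncard_image_of_injective _ toHat_injective]

/-- From a maximal chain of `P`, build the corresponding maximal chain of `Hat P`. -/
private lemma maxchain_up (C : Set P) (hC : IsMaxChain (· ≤ ·) C) :
    IsMaxChain (· ≤ ·) (insert (⊥ : Hat P) (insert ⊤ (toHat '' C))) ∧
      (insert (⊥ : Hat P) (insert ⊤ (toHat '' C))).ncard = C.ncard + 2 := by
  set M := insert (⊥ : Hat P) (insert ⊤ (toHat '' C)) with hMdef
  have hchain : IsChain (· ≤ ·) M := by
    refine IsChain.insert ?_ (fun b _ _ => Or.inl bot_le)
    refine IsChain.insert ?_ (fun b _ _ => Or.inr le_top)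
    rintro a ⟨x, hx, rfl⟩ b ⟨y, hy, rfl⟩ hne
    rcases hC.1 hx hy (fun h => hne (congrArg toHat h)) with h | h
    · exact Or.inl (toHat_le.mpr h)
    · exact Or.inr (toHat_le.mpr h)
  refine ⟨⟨hchain, ?_⟩, ?_⟩
  · intro s hs hsub
    refine Set.Subset.antisymm hsub (fun z hz => ?_)
    rcases hat_cases z with rfl | rfl | ⟨x, rfl⟩
    · exact Set.mem_insert _ _
    · exact Set.mem_insert_of_mem _ (Set.mem_insert _ _)
    · have hxins : IsChain (· ≤ ·) (insert x C) := by
        refine hC.1.insert (fun b hb hne => ?_)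
        have hbM : toHat b ∈ M := Set.mem_insert_of_mem _ (Set.mem_insert_of_mem _ ⟨b, hb, rfl⟩)
        rcases hs hz (hsub hbM) (fun h => hne (toHat_injective h)) with h | h
        · exact Or.inl (toHat_le.mp h)
        · exact Or.inr (toHat_le.mp h)
      have := hC.2 hxins (Set.subset_insert _ _)
      have hxC : x ∈ C := by
        rw [this]
        exact Set.mem_insert _ _
      exact Set.mem_insert_of_mem _ (Set.mem_insert_of_mem _ ⟨x, hxC, rfl⟩)
  · have h1 : (⊥ : Hat P) ∉ insert ⊤ (toHat '' C) := by
      rintro (h | ⟨x, -, hx⟩)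
      · exact bot_ne_top_hat h
      · exact toHat_ne_bot x hx
    have h2 : (⊤ : Hat P) ∉ toHat '' C := by
      rintro ⟨x, -, hx⟩
      exact toHat_ne_top x hx
    rw [hMdef, Set.ncard_insert_of_notMem h1 (Set.toFinite _),
      Set.ncard_insert_of_notMem h2 (Set.toFinite _),
      Set.ncard_image_of_injective _ toHat_injective]

private lemma strictMono_finCons {n : ℕ} {a : Hat P} {g : Fin (n + 1) → Hat P}
    (hg : StrictMono g) (ha : a < g 0) : StrictMono (Fin.cons a g) := by
  intro i j hij
  induction j using Fin.cases with
  | zero => exact absurd hij (Fin.not_lt_zero i)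
  | succ j' =>
    induction i using Fin.cases with
    | zero =>
      simp only [Fin.cons_zero, Fin.cons_succ]
      exact lt_of_lt_of_le ha (hg.monotone (Fin.zero_le j'))
    | succ i' =>
      simp only [Fin.cons_succ]
      exact hg (by exact Fin.succ_lt_succ_iff.mp hij)

/-- Monotone enumeration of a finite chain in `Hat P`. -/
private lemma chain_enum :
    ∀ (n : ℕ) (C : Set (Hat P)), IsChain (· ≤ ·) C → C.ncard = n + 1 →
      ∃ f : Fin (n + 1) → Hat P, StrictMono f ∧ Set.range f = C := by
  intro n
  induction n with
  | zero =>
    intro C hC hcard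
    obtain ⟨a, rfl⟩ := Set.ncard_eq_one.mp hcard
    refine ⟨fun _ => a, ?_, ?_⟩
    · intro i j hij
      rw [Fin.lt_def] at hij
      have := i.isLt
      have := j.isLt
      omega
    · simp [Set.range_const]
  | succ m ih =>
    intro C hC hcard
    have hCne : C.Nonempty := by
      rw [← Set.ncard_pos (Set.toFinite _)] at *
      omega
    obtain ⟨a, haC, hamin⟩ :=
      Set.Finite.exists_maximalFor (OrderDual.toDual : Hat P → (Hat P)ᵒᵈ) C
        (Set.toFinite _) hCne
    have haleast : ∀ b ∈ C, a ≤ b := by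
      intro b hb
      by_cases hab : a = b
      · exact hab.le
      · rcases hC haC hb hab with h | h
        · exact h
        · exact OrderDual.toDual_le_toDual.mp (hamin hb (OrderDual.toDual_le_toDual.mpr h))
    set C' := C \ {a} with hC'
    have hcard' : C'.ncard = m + 1 := by
      rw [hC']
      have := Set.ncard_diff_singleton_add_one haC (Set.toFinite _)
      omega
    have hchain' : IsChain (· ≤ ·) C' := hC.mono Set.diff_subset
    obtain ⟨g, hg, hgr⟩ := ih C' hchain' hcard'
    have hag0 : a < g 0 := by
      have hg0 : g 0 ∈ C' := hgr ▸ Set.mem_range_self 0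
      have := haleast (g 0) hg0.1
      exact lt_of_le_of_ne this (fun h => hg0.2 (by simp [← h]))
    refine ⟨Fin.cons a g, strictMono_finCons hg hag0, ?_⟩
    rw [Fin.range_cons, hgr, hC', Set.insert_diff_singleton, Set.insert_eq_of_mem haC]

/-- Every maximal chain of `Hat P` is enumerated by a full covering series. -/
private lemma maxchain_series (M : Set (Hat P)) (hM : IsMaxChain (· ≤ ·) M) :
    ∃ c : CovS P, c.head = ⊥ ∧ c.last = ⊤ ∧ c.length + 1 = M.ncard := by
  have hbot : (⊥ : Hat P) ∈ M := hM.bot_mem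
  have hMne : M.Nonempty := ⟨⊥, hbot⟩
  have hpos : 0 < M.ncard := (Set.ncard_pos (Set.toFinite _)).mpr hMne
  obtain ⟨f, hf, hfr⟩ := chain_enum (M.ncard - 1) M hM.1 (by omega)
  have hsucc_le : ∀ {i : Fin (M.ncard - 1)} {j : Fin (M.ncard - 1 + 1)},
      i.castSucc < j → i.succ ≤ j := by
    intro i j h
    rw [Fin.le_def, Fin.val_succ]
    rw [Fin.lt_def] at h
    simp only [Fin.coe_castSucc] at h
    omega
  have hsteps : ∀ i : Fin (M.ncard - 1), f i.castSucc ⋖ f i.succ := by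
    intro i
    refine ⟨hf (Fin.castSucc_lt_succ (i := i)), fun z hz1 hz2 => ?_⟩
    have hins : IsChain (· ≤ ·) (insert z M) := by
      refine hM.1.insert (fun b hb hne => ?_)
      rw [← hfr] at hb
      obtain ⟨j, rfl⟩ := hb
      rcases le_or_gt j i.castSucc with h | h
      · exact Or.inr ((hf.monotone h).trans hz1.le)
      · exact Or.inl (hz2.le.trans (hf.monotone (hsucc_le h)))
    have heq := hM.2 hins (Set.subset_insert _ _)
    have hzM : z ∈ M := by rw [heq]; exact Set.mem_insert _ _
    rw [← hfr] at hzM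
    obtain ⟨j, hj⟩ := hzM
    rcases le_or_gt j i.castSucc with h | h
    · have hle := hf.monotone h
      rw [hj] at hle
      exact lt_irrefl _ (hz1.trans_le hle)
    · have hle := hf.monotone (hsucc_le h)
      rw [hj] at hle
      exact lt_irrefl _ (hle.trans_lt hz2)
  set c : CovS P := ⟨M.ncard - 1, f, hsteps⟩ with hc
  have hhead : c.head = ⊥ := by
    have hbr : (⊥ : Hat P) ∈ Set.range f := by rw [hfr]; exact hbot
    obtain ⟨j, hj⟩ := hbr
    have : f 0 ≤ f j := hf.monotone (Fin.zero_le j)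
    rw [hj] at this
    exact le_bot_iff.mp this
  have htop : (⊤ : Hat P) ∈ M := hM.top_mem
  have hlast : c.last = ⊤ := by
    have htr : (⊤ : Hat P) ∈ Set.range f := by rw [hfr]; exact htop
    obtain ⟨j, hj⟩ := htr
    have : f j ≤ f (Fin.last _) := hf.monotone (Fin.le_last j)
    rw [hj] at this
    exact top_le_iff.mp this
  refine ⟨c, hhead, hlast, ?_⟩
  have hceq : c.length = M.ncard - 1 := rfl
  omega

/-- Purity implies every covering relation in `Hat P` drops depth by exactly one. -/
private lemma covstep_of_pure (hpure : IsPure P) :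
    ∀ p q : Hat P, p ⋖ q → depthN p = depthN q + 1 := by
  have hlen : ∀ c d : CovS P, c.head = ⊥ → c.last = ⊤ → d.head = ⊥ → d.last = ⊤ →
      c.length = d.length := by
    intro c d hch hcl hdh hdl
    obtain ⟨hcm, hcn⟩ := full_series_maxchain c hch hcl
    obtain ⟨hdm, hdn⟩ := full_series_maxchain d hdh hdl
    obtain ⟨Cc, hCc, hCcn⟩ := maxchain_down _ hcm
    obtain ⟨Cd, hCd, hCdn⟩ := maxchain_down _ hdm
    have := hpure Cc Cd hCc hCd
    omega
  intro p q hcov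
  obtain ⟨b, hbh, hbl⟩ := exists_covs (bot_le : (⊥ : Hat P) ≤ p)
  obtain ⟨cp, hph, hpl, hplen⟩ := depth_series p
  obtain ⟨cq, hqh, hql, hqlen⟩ := depth_series q
  set F₁ := b.smash cp (by rw [hbl, hph]) with hF₁
  set b' := b.snoc q (by rw [hbl]; exact hcov) with hb'
  set F₂ := b'.smash cq (by rw [RelSeries.last_snoc, hqh]) with hF₂
  have h1 := hlen F₁ F₂ (by simp [hF₁, hbh]) (by simp [hF₁, hpl])
    (by simp [hF₂, hb', hbh]) (by simp [hF₂, hql])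
  have hl1 : F₁.length = b.length + depthN p := by
    show b.length + cp.length = _
    omega
  have hl2 : F₂.length = b.length + 1 + depthN q := by
    show b'.length + cq.length = _
    have : b'.length = b.length + 1 := by
      show b.length + 0 + 1 = b.length + 1
      omega
    omega
  omega

/-- If every covering relation drops depth by exactly one, `P` is pure. -/
private lemma pure_of_covstep (hstep : ∀ p q : Hat P, p ⋖ q → depthN p = depthN q + 1) :
    IsPure P := by
  have key : ∀ C : Set P, IsMaxChain (· ≤ ·) C → C.ncard + 1 = depthN (⊥ : Hat P) := by
    intro C hC
    obtain ⟨hMmax, hMn⟩ := maxchain_up C hC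
    obtain ⟨c, hch, hcl, hclen⟩ := maxchain_series _ hMmax
    have := covs_exact hstep c.length c rfl
    rw [hch, hcl, depthN_top] at this
    omega
  intro C D hC hD
  have h1 := key C hC
  have h2 := key D hD
  omega

end HibiAux

/-- **Hibi's Gorenstein criterion (combinatorial form).**
For a finite poset `P`, the poset `T(P)` of strictly order-reversing maps has a
unique minimal element if and only if `P` is pure. -/
theorem uniqueMinT_iff_isPure (P : Type*) [Fintype P] [PartialOrder P] :
    (∃! v : Hat P → ℕ, IsMinT P v) ↔ IsPure P := by
  constructor
  · intro huniq
    apply pure_of_covstep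
    intro p q hcov
    have h1 := cov_dep_le huniq p q hcov
    have h2 := depthN_lt_of_lt hcov.lt
    omega
  · intro hpure
    refine ⟨fun x => depthN x, isMinT_dep, ?_⟩
    intro v hv
    have hvT := hv.1
    have hptw : ∀ x : Hat P, depthN x ≤ v x := dep_le_of_memT hvT
    have hdiff : ∀ p q : Hat P, p ≤ q → v q - depthN q ≤ v p - depthN p := by
      intro p q hpq
      obtain ⟨c, hch, hcl⟩ := exists_covs hpq
      have hdep := covs_exact (fun a b hab => covstep_of_pure hpure a b hab) c.length c rfl
      have hvd := covs_drop (fun a b hab => hvT.2 a b hab.lt) c.length c rfl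
      rw [hch, hcl] at hdep hvd
      have := hptw p
      have := hptw q
      omega
    exact (hv.2 _ memT_dep ⟨hptw, hdiff⟩).symm
end

section
/- Let P be a finite poset. There is exactly one v \in T(P) with v(-\infty) = rank \hat{P} if and only if height(x) + depth(x) = rank \hat{P} for every x \in P. (This is the combinatorial characterization of pseudo-Gorenstein Hibi rings: R[I(P)] is pseudo-Gorenstein iff the canonical module has exactly one generator of least degree, and such generators correspond to v \in T(P) with v(-\infty) = rank \hat{P}.) -/
open Classical

noncomputable instance fintypeWithBot {α : Type*} [Fintype α] : Fintype (WithBot α) :=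
  show Fintype (Option α) from inferInstance

noncomputable instance fintypeWithTop {α : Type*} [Fintype α] : Fintype (WithTop α) :=
  show Fintype (Option α) from inferInstance

section Aux
set_option linter.unusedSectionVars false

variable {Q : Type*} [PartialOrder Q] [Fintype Q]

lemma sm_const (x : Q) : StrictMono (fun _ : Fin 1 => x) :=
  fun i j h => absurd (Subsingleton.elim i j) h.ne

lemma chain_bound {n : ℕ} (f : Fin (n + 1) → Q) (hf : StrictMono f) :
    n + 1 ≤ Fintype.card Q := by
  simpa using Fintype.card_le_of_injective f hf.injective

lemma bdd_height (x : Q) :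
    BddAbove {n : ℕ | ∃ f : Fin (n + 1) → Q, StrictMono f ∧ ∀ i, f i ≤ x} := by
  refine ⟨Fintype.card Q, ?_⟩
  rintro n ⟨f, hf, -⟩
  have := chain_bound f hf
  omega

lemma bdd_depth (x : Q) :
    BddAbove {n : ℕ | ∃ f : Fin (n + 1) → Q, StrictMono f ∧ ∀ i, x ≤ f i} := by
  refine ⟨Fintype.card Q, ?_⟩
  rintro n ⟨f, hf, -⟩
  have := chain_bound f hf
  omega

lemma bdd_rank :
    BddAbove {n : ℕ | ∃ f : Fin (n + 1) → Q, StrictMono f} := by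
  refine ⟨Fintype.card Q, ?_⟩
  rintro n ⟨f, hf⟩
  have := chain_bound f hf
  omega

lemma nat_aux {a b : ℕ} (h : a < b + 2) : a - 1 < b + 1 := by omega

lemma height_spec (x : Q) :
    ∃ f : Fin (heightN x + 1) → Q, StrictMono f ∧ ∀ i, f i ≤ x := by
  have h : sSup {n : ℕ | ∃ f : Fin (n + 1) → Q, StrictMono f ∧ ∀ i, f i ≤ x} ∈
      {n : ℕ | ∃ f : Fin (n + 1) → Q, StrictMono f ∧ ∀ i, f i ≤ x} :=
    Nat.sSup_mem ⟨0, ⟨fun _ => x, sm_const x, fun _ => le_rfl⟩⟩ (bdd_height x)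
  exact h

lemma depth_spec (x : Q) :
    ∃ f : Fin (depthN x + 1) → Q, StrictMono f ∧ ∀ i, x ≤ f i := by
  have h : sSup {n : ℕ | ∃ f : Fin (n + 1) → Q, StrictMono f ∧ ∀ i, x ≤ f i} ∈
      {n : ℕ | ∃ f : Fin (n + 1) → Q, StrictMono f ∧ ∀ i, x ≤ f i} :=
    Nat.sSup_mem ⟨0, ⟨fun _ => x, sm_const x, fun _ => le_rfl⟩⟩ (bdd_depth x)
  exact h

lemma chain_drop {v : Q → ℕ} (hv : ∀ p q : Q, p < q → v q < v p)
    {n : ℕ} {f : Fin (n + 1) → Q} (hf : StrictMono f) :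
    ∀ k (hk : k < n + 1), v (f ⟨k, hk⟩) + k ≤ v (f 0) := by
  intro k
  induction k with
  | zero => intro hk; simp
  | succ k ih =>
    intro hk
    have h1 := ih (by omega)
    have h2 : f (⟨k, by omega⟩ : Fin (n + 1)) < f ⟨k + 1, hk⟩ :=
      hf (by simp [Fin.lt_def])
    have h3 := hv _ _ h2
    omega

lemma v_anti {v : Q → ℕ} (hv : ∀ p q : Q, p < q → v q < v p)
    {p q : Q} (h : p ≤ q) : v q ≤ v p := by
  rcases h.lt_or_eq with h' | rfl
  · exact (hv _ _ h').le
  · exact le_rfl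

lemma depthN_le {v : Q → ℕ} (hv : ∀ p q : Q, p < q → v q < v p) (x : Q) :
    depthN x ≤ v x := by
  obtain ⟨f, hf, hx⟩ := depth_spec x
  have h1 := chain_drop hv hf (depthN x) (by omega)
  have h2 : v (f 0) ≤ v x := v_anti hv (hx 0)
  omega

lemma heightN_le_v [OrderBot Q] {v : Q → ℕ} (hv : ∀ p q : Q, p < q → v q < v p)
    (x : Q) : v x + heightN x ≤ v ⊥ := by
  obtain ⟨f, hf, hx⟩ := height_spec x
  have h1 := chain_drop hv hf (heightN x) (by omega)
  have h2 : v x ≤ v (f ⟨heightN x, by omega⟩) := v_anti hv (hx _)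
  have h3 : v (f 0) ≤ v ⊥ := v_anti hv bot_le
  omega

lemma depthN_strictAnti {p q : Q} (h : p < q) : depthN q < depthN p := by
  obtain ⟨f, hf, hq⟩ := depth_spec q
  have hmem : depthN q + 1 ∈
      {n : ℕ | ∃ g : Fin (n + 1) → Q, StrictMono g ∧ ∀ i, p ≤ g i} := by
    refine ⟨fun i => if hi : i.val = 0 then p else f ⟨i.val - 1, nat_aux i.2⟩,
      ?_, ?_⟩
    · intro i j hij
      have hij' : i.val < j.val := hij
      dsimp only
      split_ifs with hi hj hj'
      · omega
      · exact lt_of_lt_of_le h (le_trans (hq 0) (hf.monotone (by simp [Fin.le_def])))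
      · omega
      · exact hf (by simp only [Fin.mk_lt_mk]; omega)
    · intro i
      dsimp only
      split_ifs with hi
      · exact le_rfl
      · exact le_trans h.le (le_trans (hq 0) (hf.monotone (by simp [Fin.le_def])))
  have h2 : depthN q + 1 ≤ depthN p := le_csSup (bdd_depth p) hmem
  omega

lemma heightN_strictMono {p q : Q} (h : p < q) : heightN p < heightN q := by
  obtain ⟨f, hf, hp⟩ := height_spec p
  have hmem : heightN p + 1 ∈
      {n : ℕ | ∃ g : Fin (n + 1) → Q, StrictMono g ∧ ∀ i, g i ≤ q} := by
    refine ⟨fun i => if hi : i.val = heightN p + 1 then q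
        else f ⟨i.val, Nat.lt_of_le_of_ne (Nat.le_of_lt_succ i.2) hi⟩, ?_, ?_⟩
    · intro i j hij
      have hij' : i.val < j.val := hij
      have hj2 : j.val < heightN p + 2 := j.2
      dsimp only
      split_ifs with hi hj hj'
      · omega
      · omega
      · exact lt_of_le_of_lt (hp _) h
      · exact hf (by simp only [Fin.mk_lt_mk]; omega)
    · intro i
      dsimp only
      split_ifs with hi
      · exact le_rfl
      · exact le_trans (hp _) h.le
  have h2 : heightN p + 1 ≤ heightN q := le_csSup (bdd_height q) hmem
  omega

lemma depthN_bot [OrderBot Q] : depthN (⊥ : Q) = rankN Q := by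
  unfold depthN rankN
  congr 1
  ext n
  exact ⟨fun ⟨f, hf, _⟩ => ⟨f, hf⟩, fun ⟨f, hf⟩ => ⟨f, hf, fun _ => bot_le⟩⟩

lemma heightN_top [OrderTop Q] : heightN (⊤ : Q) = rankN Q := by
  unfold heightN rankN
  congr 1
  ext n
  exact ⟨fun ⟨f, hf, _⟩ => ⟨f, hf⟩, fun ⟨f, hf⟩ => ⟨f, hf, fun _ => le_top⟩⟩

lemma depthN_top_s4 [OrderTop Q] : depthN (⊤ : Q) = 0 := by
  refine le_antisymm ?_ (Nat.zero_le _)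
  refine csSup_le ⟨0, fun _ => ⊤, sm_const _, fun _ => le_rfl⟩ ?_
  rintro n ⟨f, hf, hfi⟩
  by_contra hn
  have h01 : f ⟨0, by omega⟩ < f ⟨1, by omega⟩ := hf (Fin.mk_lt_mk.mpr Nat.zero_lt_one)
  exact absurd (lt_of_le_of_lt (hfi _) h01) not_top_lt

lemma heightN_bot [OrderBot Q] : heightN (⊥ : Q) = 0 := by
  refine le_antisymm ?_ (Nat.zero_le _)
  refine csSup_le ⟨0, fun _ => ⊥, sm_const _, fun _ => le_rfl⟩ ?_
  rintro n ⟨f, hf, hfi⟩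
  by_contra hn
  have h01 : f ⟨0, by omega⟩ < f ⟨1, by omega⟩ := hf (Fin.mk_lt_mk.mpr Nat.zero_lt_one)
  exact absurd (lt_of_lt_of_le h01 (hfi _)) (not_lt_bot)

lemma heightN_le_rankN (x : Q) : heightN x ≤ rankN Q := by
  refine csSup_le_csSup bdd_rank ⟨0, fun _ => x, sm_const x, fun _ => le_rfl⟩ ?_
  rintro n ⟨f, hf, -⟩
  exact ⟨f, hf⟩

end Aux

/-- **Characterization of pseudo-Gorenstein Hibi rings.** There is exactly one
`v ∈ T(P)` with `v(-∞) = rank (Hat P)` if and only if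
`height(x) + depth(x) = rank (Hat P)` for every `x ∈ P`. -/
theorem pseudoGorenstein_iff (P : Type*) [Fintype P] [PartialOrder P] :
    (∃! v : Hat P → ℕ, memT P v ∧ v ⊥ = rankN (Hat P)) ↔
      ∀ x : P, heightN (toHat x) + depthN (toHat x) = rankN (Hat P) := by
  set r := rankN (Hat P) with hr
  have hdT : memT P (fun x : Hat P => depthN x) :=
    ⟨depthN_top_s4, fun p q h => depthN_strictAnti h⟩
  have hdbot : depthN (⊥ : Hat P) = r := by rw [hr]; exact depthN_bot
  constructor
  · rintro ⟨v, hv, huniq⟩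
    have h1 : (fun x : Hat P => depthN x) = v := huniq _ ⟨hdT, hdbot⟩
    have hwT : memT P (fun x : Hat P => r - heightN x) := by
      constructor
      · show r - heightN (⊤ : Hat P) = 0
        rw [heightN_top]
        omega
      · intro p q h
        have ha := heightN_strictMono (Q := Hat P) h
        have hb := heightN_le_rankN (Q := Hat P) q
        show r - heightN q < r - heightN p
        omega
    have hwbot : (fun x : Hat P => r - heightN x) ⊥ = r := by
      show r - heightN (⊥ : Hat P) = r
      rw [heightN_bot]
      omega
    have h2 : (fun x : Hat P => r - heightN x) = v := huniq _ ⟨hwT, hwbot⟩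
    intro x
    have h3 : depthN (toHat x) = r - heightN (toHat x) := by
      have := congrFun (h1.trans h2.symm) (toHat x)
      simpa using this
    have h4 := heightN_le_rankN (Q := Hat P) (toHat x)
    omega
  · intro H
    refine ⟨fun x : Hat P => depthN x, ⟨hdT, hdbot⟩, ?_⟩
    rintro v ⟨hv, hvbot⟩
    have key : ∀ y : Hat P, depthN y ≤ v y ∧ v y + heightN y ≤ r := by
      intro y
      refine ⟨depthN_le hv.2 y, ?_⟩
      have := heightN_le_v hv.2 y
      omega
    funext x
    induction x using WithBot.recBotCoe with
    | bot => rw [hvbot]; exact hdbot.symm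
    | coe y =>
      induction y using WithTop.recTopCoe with
      | top =>
        show v ⊤ = depthN (⊤ : Hat P)
        rw [hv.1, depthN_top_s4]
      | coe p =>
        have hH := H p
        obtain ⟨k1, k2⟩ := key (toHat p)
        show v (toHat p) = depthN (toHat p)
        omega
end

section
/- Let P be a finite poset and suppose that every minimal element v of the poset T(P) satisfies v(-\infty) = rank \hat{P} (i.e. the lattice I(P) is level). Then height(x) + depth(y) \le rank \hat{P} + 1 for all x, y \in P such that x covers y in P. -/
open Classical

section AuxHt

variable {Q : Type*} [Fintype Q] (r : Q → Q → Prop)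

/-- Set of lengths of strict `r`-chains below `p`. -/
def chainSet (p : Q) : Set ℕ :=
  {n : ℕ | ∃ f : Fin (n + 1) → Q,
    (∀ i j : Fin (n + 1), i < j → r (f i) (f j) ∧ f i ≠ f j) ∧ ∀ i, r (f i) p}

noncomputable def htr (p : Q) : ℕ := sSup (chainSet r p)

lemma chainSet_bddAbove (p : Q) : BddAbove (chainSet r p) := by
  refine ⟨Fintype.card Q, fun n hn => ?_⟩
  obtain ⟨f, hf, -⟩ := hn
  have hinj : Function.Injective f := by
    intro i j hij
    rcases lt_trichotomy i j with hh | hh | hh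
    · exact absurd hij (hf i j hh).2
    · exact hh
    · exact absurd hij.symm (hf j i hh).2
  have h2 : n + 1 ≤ Fintype.card Q := by
    simpa using Fintype.card_le_of_injective f hinj
  omega

lemma zero_mem_chainSet (hrefl : ∀ a, r a a) (p : Q) : 0 ∈ chainSet r p := by
  refine ⟨fun _ => p, ?_, fun _ => hrefl p⟩
  intro i j hij
  have hi := i.isLt; have hj := j.isLt
  rw [Fin.lt_def] at hij
  omega

lemma htr_mem (hrefl : ∀ a, r a a) (p : Q) : htr r p ∈ chainSet r p :=
  Nat.sSup_mem ⟨0, zero_mem_chainSet r hrefl p⟩ (chainSet_bddAbove r p)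

lemma htr_mono (hrefl : ∀ a, r a a) (htrans : ∀ a b c, r a b → r b c → r a c)
    {p q : Q} (hpq : r p q) : htr r p ≤ htr r q := by
  obtain ⟨f, hf, hfp⟩ := htr_mem r hrefl p
  exact le_csSup (chainSet_bddAbove r q) ⟨f, hf, fun i => htrans _ _ _ (hfp i) hpq⟩

lemma htr_strict (hrefl : ∀ a, r a a) (htrans : ∀ a b c, r a b → r b c → r a c)
    (hanti : ∀ a b, r a b → r b a → a = b)
    {p q : Q} (hpq : r p q) (hne : p ≠ q) : htr r p < htr r q := by
  obtain ⟨f, hf, hfp⟩ := htr_mem r hrefl p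
  have hmem : htr r p + 1 ∈ chainSet r q := by
    refine ⟨fun i => if h : (i : ℕ) < htr r p + 1 then f ⟨i, h⟩ else q, ?_, ?_⟩
    · intro i j hij
      have hij' : (i : ℕ) < (j : ℕ) := hij
      by_cases hj : (j : ℕ) < htr r p + 1
      · have hi : (i : ℕ) < htr r p + 1 := by omega
        simp only [dif_pos hi, dif_pos hj]
        exact hf ⟨i, hi⟩ ⟨j, hj⟩ (by exact hij')
      · by_cases hi : (i : ℕ) < htr r p + 1
        · simp only [dif_pos hi, dif_neg hj]
          refine ⟨htrans _ _ _ (hfp ⟨i, hi⟩) hpq, ?_⟩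
          intro heq
          exact hne (hanti p q hpq (heq ▸ hfp ⟨i, hi⟩))
        · have hi2 := i.isLt; have hj2 := j.isLt; omega
    · intro i
      by_cases hi : (i : ℕ) < htr r p + 1
      · simp only [dif_pos hi]; exact htrans _ _ _ (hfp ⟨i, hi⟩) hpq
      · simp only [dif_neg hi]; exact hrefl q
  have h2 : htr r p + 1 ≤ htr r q := le_csSup (chainSet_bddAbove r q) hmem
  omega

lemma chainSet_down (hanti : ∀ a b, r a b → r b a → a = b)
    {x y : Q} (hdown : ∀ z, r z x → z ≠ x → r z y)
    {m : ℕ} (hm : m + 1 ∈ chainSet r x) : m ≤ htr r y := by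
  obtain ⟨f, hf, hfx⟩ := hm
  by_cases hall : ∀ i, f i ≠ x
  · have : m + 1 ∈ chainSet r y := ⟨f, hf, fun i => hdown _ (hfx i) (hall i)⟩
    have h2 : m + 1 ≤ htr r y := le_csSup (chainSet_bddAbove r y) this
    omega
  · push_neg at hall
    obtain ⟨k, hk⟩ := hall
    have hlast : f (Fin.last (m + 1)) = x := by
      rcases eq_or_lt_of_le (Fin.le_last k) with hh | hh
      · rw [← hh]; exact hk
      · exact (hanti _ _ (hfx _) (hk ▸ (hf k (Fin.last (m + 1)) hh).1))
    have : m ∈ chainSet r y := by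
      refine ⟨fun i => f i.castSucc, ?_, ?_⟩
      · intro i j hij
        exact hf i.castSucc j.castSucc (Fin.castSucc_lt_castSucc_iff.mpr hij)
      · intro i
        have hne : f i.castSucc ≠ x :=
          hlast ▸ (hf i.castSucc (Fin.last (m + 1)) (Fin.castSucc_lt_last i)).2
        exact hdown _ (hfx _) hne
    exact le_csSup (chainSet_bddAbove r y) this

/-- If everything strictly `r`-below `x` is `r`-below `y`, and `y` is strictly
below `x`, then the `r`-height of `x` is exactly one more than that of `y`. -/
lemma htr_succ (hrefl : ∀ a, r a a) (htrans : ∀ a b c, r a b → r b c → r a c)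
    (hanti : ∀ a b, r a b → r b a → a = b)
    {x y : Q} (hyx : r y x) (hne : y ≠ x)
    (hdown : ∀ z, r z x → z ≠ x → r z y) : htr r x = htr r y + 1 := by
  have hlt : htr r y < htr r x := htr_strict r hrefl htrans hanti hyx hne
  have hle : htr r x ≤ htr r y + 1 := by
    rcases Nat.eq_zero_or_pos (htr r x) with h0 | hpos
    · omega
    obtain ⟨m, hm⟩ : ∃ m, htr r x = m + 1 := ⟨htr r x - 1, by omega⟩
    have hmem : m + 1 ∈ chainSet r x := hm ▸ htr_mem r hrefl x
    have := chainSet_down r hanti hdown hmem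
    omega
  omega

end AuxHt


section MainAux

variable {P : Type*} [PartialOrder P]

lemma memT_antitone {w : Hat P → ℕ} (hw : memT P w) {p q : Hat P} (h : p ≤ q) :
    w q ≤ w p := by
  rcases eq_or_lt_of_le h with rfl | h
  · exact le_rfl
  · exact le_of_lt (hw.2 _ _ h)

lemma chain_drop_s6 {w : Hat P → ℕ} (hw : memT P w) :
    ∀ {n : ℕ} (f : Fin (n + 1) → Hat P), StrictMono f →
      w (f (Fin.last n)) + n ≤ w (f 0) := by
  intro n
  induction n with
  | zero => intro f hf; simp [Fin.last]
  | succ n ih =>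
    intro f hf
    have h1 := ih (fun i => f i.castSucc)
      (fun i j hij => hf (Fin.castSucc_lt_castSucc_iff.mpr hij))
    simp only [Fin.castSucc_zero] at h1
    have h2 : f (Fin.last n).castSucc < f (Fin.last (n + 1)) :=
      hf (Fin.castSucc_lt_last _)
    have h3 := hw.2 _ _ h2
    omega

end MainAux

/-- **Necessary condition for levelness.** If every minimal element `v` of
`T(P)` satisfies `v(-∞) = rank (Hat P)` (i.e. the lattice `I(P)` is level),
then `height(x) + depth(y) ≤ rank (Hat P) + 1` for all `x, y ∈ P` such that `x`
covers `y`. -/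

theorem level_implies_height_add_depth_le (P : Type*) [Fintype P] [PartialOrder P]
    (h : ∀ v : Hat P → ℕ, IsMinT P v → v ⊥ = rankN (Hat P)) :
    ∀ x y : P, y ⋖ x →
      heightN (toHat x) + depthN (toHat y) ≤ rankN (Hat P) + 1 := by
  intro x y hyx
  letI : Fintype (Hat P) := by unfold Hat WithBot WithTop; infer_instance
  have hyx' : toHat y < toHat x :=
    WithBot.coe_lt_coe.mpr (WithTop.coe_lt_coe.mpr hyx.lt)
  -- the cover relation in `Hat P`: nothing strictly between `toHat y` and `toHat x`
  have hmid : ∀ z : Hat P, toHat y ≤ z → z < toHat x → z = toHat y := by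
    intro z h1 h2
    induction z using WithBot.recBotCoe with
    | bot => exact absurd h1 (WithBot.not_coe_le_bot _)
    | coe z1 =>
      induction z1 using WithTop.recTopCoe with
      | top =>
        exact absurd (WithBot.coe_lt_coe.mp h2) not_top_lt
      | coe z0 =>
        have hyz : y ≤ z0 := WithTop.coe_le_coe.mp (WithBot.coe_le_coe.mp h1)
        have hzx : z0 < x := WithTop.coe_lt_coe.mp (WithBot.coe_lt_coe.mp h2)
        rcases eq_or_lt_of_le hyz with hh | hh
        · simp [toHat, ← hh]
        · exact absurd hzx (hyx.2 hh)
  -- the extended partial order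
  set r : Hat P → Hat P → Prop :=
    fun a b => a ≤ b ∨ (a < toHat x ∧ toHat y ≤ b) with hr
  have hrefl : ∀ a, r a a := fun a => Or.inl le_rfl
  have htrans : ∀ a b c, r a b → r b c → r a c := by
    rintro a b c (hab | ⟨hab1, hab2⟩) (hbc | ⟨hbc1, hbc2⟩)
    · exact Or.inl (hab.trans hbc)
    · exact Or.inr ⟨lt_of_le_of_lt hab hbc1, hbc2⟩
    · exact Or.inr ⟨hab1, hab2.trans hbc⟩
    · exact Or.inr ⟨hab1, hbc2⟩
  have hanti : ∀ a b, r a b → r b a → a = b := by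
    rintro a b (hab | ⟨hab1, hab2⟩) (hba | ⟨hba1, hba2⟩)
    · exact le_antisymm hab hba
    · have hb : b = toHat y := hmid b (hba2.trans hab) hba1
      exact le_antisymm hab (hb ▸ hba2)
    · have ha : a = toHat y := hmid a (hab2.trans hba) hab1
      exact (le_antisymm hba (ha ▸ hab2)).symm
    · have ha : a = toHat y := hmid a hba2 hab1
      have hb : b = toHat y := hmid b hab2 hba1
      rw [ha, hb]
  have hdown : ∀ z, r z (toHat x) → z ≠ toHat x → r z (toHat y) := by
    rintro z (hz | ⟨hz1, _⟩) hne
    · exact Or.inr ⟨lt_of_le_of_ne hz hne, le_rfl⟩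
    · exact Or.inr ⟨hz1, le_rfl⟩
  have hle_r : ∀ a b : Hat P, a ≤ b → r a b := fun a b hab => Or.inl hab
  -- key equation on heights in the extended order
  have hkey : htr r (toHat x) = htr r (toHat y) + 1 :=
    htr_succ r hrefl htrans hanti (hle_r _ _ hyx'.le) hyx'.ne hdown
  -- the element v of T(P)
  set v : Hat P → ℕ := fun p => htr r ⊤ - htr r p with hv
  have hvmono : ∀ p : Hat P, htr r p ≤ htr r ⊤ :=
    fun p => htr_mono r hrefl htrans (hle_r _ _ le_top)
  have hvT : memT P v := by
    constructor
    · simp [hv]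
    · intro p q hpq
      have h1 : htr r p < htr r q :=
        htr_strict r hrefl htrans hanti (hle_r _ _ hpq.le) hpq.ne
      have h2 := hvmono q
      simp only [hv]
      omega
  have hv1 : v (toHat y) = v (toHat x) + 1 := by
    have h2 := hvmono (toHat x)
    simp only [hv]
    omega
  -- find a minimal element of T(P) below v
  set A : Set ℕ := {n | ∃ w : Hat P → ℕ, (memT P w ∧ Tge P v w) ∧ ∑ p, w p = n}
    with hA
  have hAne : A.Nonempty :=
    ⟨∑ p, v p, v, ⟨hvT, fun p => le_rfl, fun p q _ => by omega⟩, rfl⟩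
  obtain ⟨w, ⟨hwT, hwge⟩, hwsum⟩ : sInf A ∈ A := Nat.sInf_mem hAne
  have hwmin : IsMinT P w := by
    refine ⟨hwT, fun w' hw'T hge => ?_⟩
    have hle : ∀ p, w' p ≤ w p := hge.1
    have hgev : Tge P v w' := by
      refine ⟨fun p => (hle p).trans (hwge.1 p), fun p q hpq => ?_⟩
      have h1 := hwge.2 p q hpq
      have h2 := hge.2 p q hpq
      have h3 := hwge.1 p; have h4 := hwge.1 q
      have h5 := hle p; have h6 := hle q
      omega
    by_contra hne'
    obtain ⟨p₀, hp₀⟩ := Function.ne_iff.mp hne'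
    have hsumlt : ∑ p, w' p < ∑ p, w p :=
      Finset.sum_lt_sum (fun i _ => hle i)
        ⟨p₀, Finset.mem_univ _, lt_of_le_of_ne (hle p₀) hp₀⟩
    have : sInf A ≤ ∑ p, w' p := Nat.sInf_le ⟨w', ⟨hw'T, hgev⟩, rfl⟩
    omega
  have hwbot : w ⊥ = rankN (Hat P) := h w hwmin
  -- chain inequalities
  have hHmem : heightN (toHat x) ∈
      {n : ℕ | ∃ f : Fin (n + 1) → Hat P, StrictMono f ∧ ∀ i, f i ≤ toHat x} := by
    apply Nat.sSup_mem
    · refine ⟨0, fun _ => toHat x, ?_, fun _ => le_rfl⟩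
      intro i j hij
      have hi := i.isLt; have hj := j.isLt
      rw [Fin.lt_def] at hij; omega
    · refine ⟨Fintype.card (Hat P), fun n hn => ?_⟩
      obtain ⟨f, hf, -⟩ := hn
      have := Fintype.card_le_of_injective f hf.injective
      simp only [Fintype.card_fin] at this
      omega
  have hDmem : depthN (toHat y) ∈
      {n : ℕ | ∃ f : Fin (n + 1) → Hat P, StrictMono f ∧ ∀ i, toHat y ≤ f i} := by
    apply Nat.sSup_mem
    · refine ⟨0, fun _ => toHat y, ?_, fun _ => le_rfl⟩
      intro i j hij
      have hi := i.isLt; have hj := j.isLt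
      rw [Fin.lt_def] at hij; omega
    · refine ⟨Fintype.card (Hat P), fun n hn => ?_⟩
      obtain ⟨f, hf, -⟩ := hn
      have := Fintype.card_le_of_injective f hf.injective
      simp only [Fintype.card_fin] at this
      omega
  obtain ⟨f, hf, hfle⟩ := hHmem
  obtain ⟨g, hg, hgle⟩ := hDmem
  -- w ⊥ ≥ heightN x + w x
  have hdropf := chain_drop_s6 hwT f hf
  have hxf : w (toHat x) ≤ w (f (Fin.last _)) := memT_antitone hwT (hfle _)
  have hbotf : w (f 0) ≤ w ⊥ := memT_antitone hwT bot_le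
  -- w y ≥ depthN y
  have hdropg := chain_drop_s6 hwT g hg
  have hyg : w (g 0) ≤ w (toHat y) := memT_antitone hwT (hgle _)
  have hwy : w (toHat y) ≤ w (toHat x) + 1 := by
    have h1 := hwge.2 (toHat y) (toHat x) hyx'.le
    have h2 := hwge.1 (toHat x)
    have h3 := hwge.1 (toHat y)
    omega
  omega
end

section
/- Let P be a finite poset admitting a canonical chain decomposition (P is the disjoint union of chains C_1, ..., C_d, each of which is a maximal chain of P), and suppose I(P) is regular hyper-planar. Then for every canonical chain decomposition C_1 \cup ... \cup C_d of P, every index i, and every x \in C_i, one has height_{C_i}(x) = height_P(x), where height_P(x) is the maximum length of a chain in P with greatest element x. -/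
open Classical

/-- The height of `x` inside a chain `C`: the number of elements of `C`
strictly below `x`. -/
noncomputable def heightC {P : Type*} [PartialOrder P] (C : Set P) (x : P) : ℕ :=
  {z ∈ C | z < x}.ncard

/-- A canonical chain decomposition of `P`: a partition of `P` into chains,
each of which is a maximal chain of `P`. -/
def IsCCD {P : Type*} [PartialOrder P] {d : ℕ} (C : Fin d → Set P) : Prop :=
  (∀ i, IsMaxChain (· ≤ ·) (C i)) ∧
  (∀ i j, i ≠ j → Disjoint (C i) (C j)) ∧
  (⋃ i, C i) = Set.univ

/-- The lattice of lower sets of `P` is regular hyper-planar: `P` admits a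
canonical chain decomposition and, for every canonical chain decomposition and
all `x < y` with `x ∈ Cᵢ`, `y ∈ Cⱼ`, one has `height_{Cᵢ}(x) < height_{Cⱼ}(y)`. -/
def RegularHP (P : Type*) [PartialOrder P] : Prop :=
  (∃ (d : ℕ) (C : Fin d → Set P), IsCCD C) ∧
  ∀ (d : ℕ) (C : Fin d → Set P), IsCCD C →
    ∀ (i j : Fin d) (x y : P), x ∈ C i → y ∈ C j → x < y →
      heightC (C i) x < heightC (C j) y

/-- The lattice of lower sets of `P` is regular planar: `P` admits a canonical
chain decomposition into two chains and the regularity condition holds for all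
such decompositions. -/
def RegularPlanar (P : Type*) [PartialOrder P] : Prop :=
  (∃ C : Fin 2 → Set P, IsCCD C) ∧
  ∀ C : Fin 2 → Set P, IsCCD C →
    ∀ (i j : Fin 2) (x y : P), x ∈ C i → y ∈ C j → x < y →
      heightC (C i) x < heightC (C j) y

section Aux

variable {P : Type*} [Fintype P] [PartialOrder P]

lemma heightN_set_nonempty (x : P) :
    {n : ℕ | ∃ f : Fin (n + 1) → P, StrictMono f ∧ ∀ i, f i ≤ x}.Nonempty := by
  refine ⟨0, fun _ => x, ?_, fun _ => le_rfl⟩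
  intro i j hij
  have h1 := i.isLt
  have h2 := j.isLt
  have h3 : (i : ℕ) < (j : ℕ) := hij
  omega

lemma heightN_set_bdd (x : P) :
    BddAbove {n : ℕ | ∃ f : Fin (n + 1) → P, StrictMono f ∧ ∀ i, f i ≤ x} := by
  refine ⟨Fintype.card P, fun n hn => ?_⟩
  obtain ⟨f, hf, -⟩ := hn
  have h := Fintype.card_le_of_injective f hf.injective
  simp only [Fintype.card_fin] at h
  omega

lemma heightN_lt_of_lt {z x : P} (hzx : z < x) : heightN z < heightN x := by
  have hmem : heightN z ∈ {n : ℕ | ∃ f : Fin (n + 1) → P, StrictMono f ∧ ∀ i, f i ≤ z} :=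
    Nat.sSup_mem (heightN_set_nonempty z) (heightN_set_bdd z)
  obtain ⟨f, hf, hfle⟩ := hmem
  have key : heightN z + 1 ∈ {m : ℕ | ∃ g : Fin (m + 1) → P, StrictMono g ∧ ∀ i, g i ≤ x} := by
    refine ⟨fun k => if hk : (k : ℕ) < heightN z + 1 then f ⟨k, hk⟩ else x, ?_, ?_⟩
    · intro a b hab
      have hab' : (a : ℕ) < (b : ℕ) := hab
      by_cases ha : (a : ℕ) < heightN z + 1
      · by_cases hb : (b : ℕ) < heightN z + 1
        · simp only [dif_pos ha, dif_pos hb]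
          exact hf (show (⟨(a : ℕ), ha⟩ : Fin (heightN z + 1)) < ⟨(b : ℕ), hb⟩ from hab')
        · simp only [dif_pos ha, dif_neg hb]
          exact lt_of_le_of_lt (hfle _) hzx
      · exfalso
        have := b.isLt
        omega
    · intro k
      by_cases hk : (k : ℕ) < heightN z + 1
      · simp only [dif_pos hk]
        exact le_of_lt (lt_of_le_of_lt (hfle _) hzx)
      · simp only [dif_neg hk, le_refl]
  have hle := le_csSup (heightN_set_bdd x) key
  exact Nat.lt_of_succ_le hle

lemma heightC_le_heightN {C : Set P} (hchain : IsChain (· ≤ ·) C) :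
    ∀ h : ℕ, ∀ x ∈ C, heightC C x = h → h ≤ heightN x := by
  intro h
  induction h with
  | zero => intro x _ _; exact Nat.zero_le _
  | succ h ih =>
    intro x hx hcx
    have hS : {z ∈ C | z < x}.ncard = h + 1 := hcx
    have hfin : {z ∈ C | z < x}.Finite := Set.toFinite _
    have hne : {z ∈ C | z < x}.Nonempty := by
      rw [← Set.ncard_pos hfin]
      omega
    obtain ⟨z0, hz0max⟩ := hfin.exists_maximal hne
    have hz0 := hz0max.1
    have hmax : ∀ w ∈ {z ∈ C | z < x}, z0 ≤ w → z0 = w :=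
      fun w hw h => le_antisymm h (hz0max.2 hw h)
    have hz0C : z0 ∈ C := hz0.1
    have hz0x : z0 < x := hz0.2
    have hsub : {w ∈ C | w < z0} = {z ∈ C | z < x} \ {z0} := by
      ext w
      simp only [Set.mem_setOf_eq, Set.mem_diff, Set.mem_singleton_iff]
      constructor
      · rintro ⟨hwC, hw⟩
        exact ⟨⟨hwC, hw.trans hz0x⟩, fun e => absurd (e ▸ hw) (lt_irrefl _)⟩
      · rintro ⟨⟨hwC, hwx⟩, hne'⟩
        refine ⟨hwC, ?_⟩
        rcases hchain hwC hz0C hne' with h1 | h1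
        · exact lt_of_le_of_ne h1 hne'
        · exact absurd (hmax w ⟨hwC, hwx⟩ h1).symm hne'
    have hz0h : heightC C z0 = h := by
      have := Set.ncard_diff_singleton_of_mem hz0
      rw [heightC, hsub, this, hS]
      omega
    have h1 := ih z0 hz0C hz0h
    have h2 := heightN_lt_of_lt hz0x
    omega

lemma heightN_le_heightC {d : ℕ} {C : Fin d → Set P} (hC : IsCCD C)
    (hreg : RegularHP P) (i : Fin d) (x : P) (hx : x ∈ C i) :
    heightN x ≤ heightC (C i) x := by
  refine csSup_le (heightN_set_nonempty x) ?_
  rintro n ⟨f, hf, hfle⟩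
  have hcover : ∀ y : P, ∃ j, y ∈ C j := by
    intro y
    have h1 : y ∈ ⋃ j, C j := by rw [hC.2.2]; trivial
    simpa using h1
  choose j hj using fun k => hcover (f k)
  have hstep : ∀ k : Fin (n + 1), (k : ℕ) ≤ heightC (C (j k)) (f k) := by
    intro k
    induction k using Fin.induction with
    | zero => exact Nat.zero_le _
    | succ k ih =>
      have hlt : f k.castSucc < f k.succ := hf (Fin.castSucc_lt_succ (i := k))
      have h2 := hreg.2 d C hC (j k.castSucc) (j k.succ) _ _
        (hj k.castSucc) (hj k.succ) hlt
      have h3 : (k.castSucc : ℕ) = (k : ℕ) := rfl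
      have h4 : (k.succ : ℕ) = (k : ℕ) + 1 := rfl
      omega
  have hn := hstep (Fin.last n)
  have hlast : ((Fin.last n : Fin (n + 1)) : ℕ) = n := rfl
  rcases lt_or_eq_of_le (hfle (Fin.last n)) with hlt | heq
  · have h2 := hreg.2 d C hC (j (Fin.last n)) i _ _ (hj (Fin.last n)) hx hlt
    omega
  · have hji : j (Fin.last n) = i := by
      by_contra hne
      exact Set.disjoint_left.mp (hC.2.1 _ _ hne) (heq ▸ hj (Fin.last n)) hx
    rw [hji, heq] at hn
    omega

end Aux

/-- If `I(P)` is regular hyper-planar, then for every canonical chain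
decomposition `C₁ ∪ … ∪ C_d` of `P`, every index `i` and every `x ∈ Cᵢ`,
the height of `x` inside the chain `Cᵢ` equals the height of `x` in `P`. -/
theorem heightC_eq_heightN_of_regular (P : Type*) [Fintype P] [PartialOrder P]
    (hreg : RegularHP P) :
    ∀ (d : ℕ) (C : Fin d → Set P), IsCCD C → ∀ i : Fin d, ∀ x ∈ C i,
      heightC (C i) x = heightN x := by
  intro d C hCCD i x hx
  refine le_antisymm ?_ (heightN_le_heightC hCCD hreg i x hx)
  exact heightC_le_heightN (hCCD.1 i).1 _ x hx rfl
end

section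
/- Let P be a finite poset such that I(P) is regular hyper-planar, with canonical chain decomposition C_1 \cup ... \cup C_d. Then (b) rank P = max{\ell(C_1), ..., \ell(C_d)}, and (c) for every index i with \ell(C_i) = rank P and every x \in C_i, one has height(x) + depth(x) = rank \hat{P}, where height and depth are computed in \hat{P}. -/
open Classical

section Auxiliary

variable {P : Type*} [PartialOrder P]

lemma toHat_lt_iff {a b : P} : toHat a < toHat b ↔ a < b := by simp [toHat]

lemma toHat_le_iff {a b : P} : toHat a ≤ toHat b ↔ a ≤ b := by simp [toHat]

lemma bot_lt_toHat (a : P) : (⊥ : Hat P) < toHat a := by simp [toHat]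

lemma hat_top_eq : (⊤ : Hat P) = ((⊤ : WithTop P) : WithBot (WithTop P)) := by simp

lemma toHat_lt_top (a : P) : toHat a < (⊤ : Hat P) := by
  rw [hat_top_eq, toHat, WithBot.coe_lt_coe]
  exact WithTop.coe_lt_top a

lemma exists_toHat {y : Hat P} (h1 : y ≠ ⊥) (h2 : y ≠ ⊤) : ∃ p : P, toHat p = y := by
  induction y using WithBot.recBotCoe with
  | bot => exact absurd rfl h1
  | coe a =>
    induction a using WithTop.recTopCoe with
    | top => exact absurd hat_top_eq.symm h2
    | coe p => exact ⟨p, rfl⟩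

lemma extract_chain {n : ℕ} (f : Fin (n + 1) → Hat P) (hf : StrictMono f)
    (h1 : ∀ k, f k ≠ ⊥) (h2 : ∀ k, f k ≠ ⊤) :
    ∃ g : Fin (n + 1) → P, StrictMono g ∧ ∀ k, toHat (g k) = f k := by
  choose g hg using fun k => exists_toHat (h1 k) (h2 k)
  exact ⟨g, fun a b hab => toHat_lt_iff.mp (by rw [hg a, hg b]; exact hf hab), hg⟩

lemma strictMono_fin_cons {Q : Type*} [PartialOrder Q] {n : ℕ} {b : Q} {g : Fin (n + 1) → Q}
    (hg : StrictMono g) (hb : ∀ k, b < g k) :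
    StrictMono (Fin.cons b g : Fin (n + 2) → Q) := by
  intro i j hij
  induction i using Fin.cases with
  | zero =>
    induction j using Fin.cases with
    | zero => exact absurd hij (lt_irrefl _)
    | succ j' => simpa using hb j'
  | succ i' =>
    induction j using Fin.cases with
    | zero => exact absurd hij (by simp [Fin.lt_def])
    | succ j' =>
      have hlt : i' < j' := by
        simp only [Fin.lt_def, Fin.val_succ] at hij ⊢; omega
      simpa using hg hlt

lemma strictMono_fin_snoc {Q : Type*} [PartialOrder Q] {n : ℕ} {g : Fin (n + 1) → Q} {t : Q}
    (hg : StrictMono g) (ht : ∀ k, g k < t) :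
    StrictMono (Fin.snoc g t : Fin (n + 2) → Q) := by
  intro i j hij
  rcases Fin.eq_castSucc_or_eq_last i with ⟨i', rfl⟩ | rfl
  · rcases Fin.eq_castSucc_or_eq_last j with ⟨j', rfl⟩ | rfl
    · have hlt : i' < j' := by
        simp only [Fin.lt_def, Fin.coe_castSucc] at hij ⊢; omega
      simpa using hg hlt
    · simpa using ht i'
  · exact absurd hij (not_lt.mpr (Fin.le_last j))

lemma enum_chain {Q : Type*} [PartialOrder Q] {D : Set Q} (hD : IsChain (· ≤ ·) D)
    (hfin : D.Finite) {m : ℕ} (hm : D.ncard = m + 1) :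
    ∃ g : Fin (m + 1) → Q, StrictMono g ∧ Set.range g = D := by
  haveI := hfin.fintype
  letI : LinearOrder ↥D :=
    { (inferInstance : PartialOrder ↥D) with
      le_total := fun a b => hD.total a.2 b.2
      toDecidableLE := Classical.decRel _ }
  have hcard : Fintype.card ↥D = m + 1 := by
    rw [← Nat.card_eq_fintype_card, Nat.card_coe_set_eq, hm]
  have e := monoEquivOfFin ↥D hcard
  refine ⟨fun k => (e k : Q), fun a b hab => ?_, ?_⟩
  · exact Subtype.coe_lt_coe.mpr (e.strictMono hab)
  · ext z
    simp only [Set.mem_range]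
    constructor
    · rintro ⟨k, rfl⟩; exact (e k).2
    · intro hz; exact ⟨e.symm ⟨z, hz⟩, by simp⟩

lemma strictMono_fin_nat_le {m : ℕ} (u : Fin (m + 1) → ℕ) (hu : StrictMono u) :
    u 0 + m ≤ u (Fin.last m) := by
  have key : ∀ j : ℕ, ∀ hj : j < m + 1, u 0 + j ≤ u ⟨j, hj⟩ := by
    intro j
    induction j with
    | zero => intro hj; simpa using le_refl (u 0)
    | succ j ih =>
      intro hj
      have h1 := ih (by omega)
      have h2 : u ⟨j, by omega⟩ < u ⟨j + 1, hj⟩ := hu (by simp [Fin.lt_def])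
      omega
  exact key m (by omega)

lemma heightC_le_ncard {C : Set P} {x : P} (hfin : C.Finite) (hx : x ∈ C) :
    heightC C x ≤ C.ncard - 1 := by
  have h1 : {z ∈ C | z < x} ⊆ C \ {x} := by
    rintro z ⟨hz, hlt⟩
    exact ⟨hz, by rintro rfl; exact lt_irrefl _ hlt⟩
  calc heightC C x ≤ (C \ {x}).ncard := Set.ncard_le_ncard h1 (hfin.subset Set.diff_subset)
    _ = C.ncard - 1 := Set.ncard_diff_singleton_of_mem hx

lemma chain_count {C : Set P} (hC : IsChain (· ≤ ·) C) (hfin : C.Finite) {x : P} (hx : x ∈ C) :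
    C.ncard = heightC C x + 1 + {z ∈ C | x < z}.ncard := by
  have hdecomp : C = {z ∈ C | z < x} ∪ insert x {z ∈ C | x < z} := by
    ext z
    constructor
    · intro hz
      rcases eq_or_ne z x with rfl | hne
      · exact Or.inr (Set.mem_insert _ _)
      · rcases hC hz hx hne with hle | hle
        · exact Or.inl ⟨hz, lt_of_le_of_ne hle hne⟩
        · exact Or.inr (Set.mem_insert_of_mem _ ⟨hz, lt_of_le_of_ne hle (Ne.symm hne)⟩)
    · rintro (⟨hz, -⟩ | hz)
      · exact hz
      · rcases hz with rfl | ⟨hz, -⟩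
        · exact hx
        · exact hz
  have hdisj : Disjoint {z ∈ C | z < x} (insert x {z ∈ C | x < z}) := by
    rw [Set.disjoint_left]
    rintro z ⟨-, hlt⟩ hz
    rcases hz with rfl | ⟨-, hgt⟩
    · exact lt_irrefl _ hlt
    · exact lt_asymm hlt hgt
  have hxnot : x ∉ {z ∈ C | x < z} := fun hm => lt_irrefl _ hm.2
  have hf1 : {z ∈ C | z < x}.Finite := hfin.subset (Set.sep_subset _ _)
  have hf2 : {z ∈ C | x < z}.Finite := hfin.subset (Set.sep_subset _ _)
  conv_lhs => rw [hdecomp]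
  rw [Set.ncard_union_eq hdisj hf1 (hf2.insert x), Set.ncard_insert_of_notMem hxnot hf2]
  show ({z ∈ C | z < x}).ncard + _ = ({z ∈ C | z < x}).ncard + 1 + _
  omega

lemma bdd_of_exists {Q : Type*} [Preorder Q] [Finite Q] {s : Set ℕ}
    (hs : ∀ n ∈ s, ∃ f : Fin (n + 1) → Q, StrictMono f) : BddAbove s := by
  refine ⟨Nat.card Q, fun n hn => ?_⟩
  obtain ⟨f, hf⟩ := hs n hn
  have h1 := Nat.card_le_card_of_injective f hf.injective
  simp only [Nat.card_eq_fintype_card, Fintype.card_fin] at h1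
  omega

end Auxiliary

/-- If `I(P)` is regular hyper-planar with canonical chain decomposition
`C₁ ∪ … ∪ C_d`, then (b) `rank P = max ℓ(Cᵢ)` and (c) for every `i` with
`ℓ(Cᵢ) = rank P` and every `x ∈ Cᵢ`, `height(x) + depth(x) = rank (Hat P)`,
where height and depth are computed in `Hat P`. -/
theorem rank_and_height_add_depth_of_regular (P : Type*) [Fintype P]
    [PartialOrder P] (hreg : RegularHP P) (d : ℕ) (C : Fin d → Set P)
    (hC : IsCCD C) :
    rankN P = Finset.univ.sup (fun i => (C i).ncard - 1) ∧
      ∀ i : Fin d, (C i).ncard - 1 = rankN P → ∀ x ∈ C i,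
        heightN (toHat x) + depthN (toHat x) = rankN (Hat P) := by
  classical
  haveI : Finite (Hat P) := Finite.of_equiv (Option (Option P)) (Equiv.refl _)
  have hreg2 := hreg.2 d C hC
  obtain ⟨hCmax, hCdisj, hCcov⟩ := hC
  have hmem : ∀ x : P, ∃ i, x ∈ C i := by
    intro x
    have hx : x ∈ ⋃ i, C i := hCcov.symm ▸ Set.mem_univ x
    simpa using hx
  choose ix hix using hmem
  have hix_eq : ∀ {i : Fin d} {x : P}, x ∈ C i → ix x = i := by
    intro i x hx
    by_contra hne
    exact Set.disjoint_left.mp (hCdisj _ _ hne) (hix x) hx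
  set H : P → ℕ := fun x => heightC (C (ix x)) x with hHdef
  have hH_eq : ∀ {i : Fin d} {x : P}, x ∈ C i → H x = heightC (C i) x := by
    intro i x hx
    simp only [hHdef]
    rw [hix_eq hx]
  have hH_mono : ∀ {x y : P}, x < y → H x < H y := fun {x y} hxy =>
    hreg2 _ _ _ _ (hix x) (hix y) hxy
  set r := Finset.univ.sup (fun i => (C i).ncard - 1) with hrdef
  have hH_le : ∀ x : P, H x ≤ r := by
    intro x
    calc H x ≤ (C (ix x)).ncard - 1 := heightC_le_ncard (Set.toFinite _) (hix x)
      _ ≤ r := Finset.le_sup (f := fun j => (C j).ncard - 1) (Finset.mem_univ (ix x))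
  have key : ∀ (m : ℕ) (g : Fin (m + 1) → P), StrictMono g →
      H (g 0) + m ≤ H (g (Fin.last m)) := fun m g hg =>
    strictMono_fin_nat_le (H ∘ g) (fun a b hab => hH_mono (hg hab))
  -- part (b)
  have hb_le : rankN P ≤ r := by
    apply csSup_le'
    rintro n ⟨f, hf⟩
    have h1 := key n f hf
    have h2 := hH_le (f (Fin.last n))
    omega
  have hb_ge : ∀ i : Fin d, (C i).ncard - 1 ≤ rankN P := by
    intro i
    rcases Nat.eq_zero_or_pos (C i).ncard with h0 | hpos
    · simp [h0]
    · obtain ⟨m, hm⟩ : ∃ m, (C i).ncard = m + 1 := ⟨(C i).ncard - 1, by omega⟩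
      obtain ⟨g, hg, -⟩ := enum_chain (hCmax i).1 (Set.toFinite _) hm
      have hmem' : m ∈ {n : ℕ | ∃ f : Fin (n + 1) → P, StrictMono f} := ⟨g, hg⟩
      have hle := le_csSup (bdd_of_exists (fun n hn => hn)) hmem'
      rw [hm]
      have hle' : m ≤ rankN P := hle
      simpa using hle'
  have hb : rankN P = r := le_antisymm hb_le (Finset.sup_le fun i _ => hb_ge i)
  refine ⟨hb, ?_⟩
  -- part (c)
  intro i hi x hx
  set h := heightC (C i) x with hhdef
  have hxH : H x = h := hH_eq hx
  have hnc : (C i).ncard = r + 1 := by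
    have h1 : (C i).ncard - 1 = r := by rw [hi, hb]
    have h2 : 0 < (C i).ncard := (Set.ncard_pos (Set.toFinite _)).mpr ⟨x, hx⟩
    omega
  have hcount := chain_count (hCmax i).1 (Set.toFinite _) hx
  have hhr : h ≤ r := by
    have h1 := heightC_le_ncard (Set.toFinite (C i)) hx
    omega
  have ha : {z ∈ C i | x < z}.ncard = r - h := by omega
  -- height lower bound
  have hht_lb : h + 1 ≤ heightN (toHat x) := by
    have hDsub : insert x {z ∈ C i | z < x} ⊆ C i := by
      rintro z (rfl | ⟨hz, -⟩)
      · exact hx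
      · exact hz
    have hDchain : IsChain (· ≤ ·) (insert x {z ∈ C i | z < x}) := (hCmax i).1.mono hDsub
    have hDcard : (insert x {z ∈ C i | z < x}).ncard = h + 1 := by
      rw [Set.ncard_insert_of_notMem (fun hm => lt_irrefl _ hm.2) (Set.toFinite _), hhdef]
      rfl
    obtain ⟨g, hg, hrange⟩ := enum_chain hDchain (Set.toFinite _) hDcard
    have hgle : ∀ k, g k ≤ x := by
      intro k
      have hm : g k ∈ insert x {z ∈ C i | z < x} := hrange ▸ Set.mem_range_self k
      rcases hm with heq | ⟨-, hlt⟩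
      · exact le_of_eq heq
      · exact hlt.le
    refine le_csSup (bdd_of_exists (Q := Hat P) ?_) ⟨Fin.cons ⊥ (toHat ∘ g), ?_, ?_⟩
    · rintro n ⟨f, hf, -⟩
      exact ⟨f, hf⟩
    · exact strictMono_fin_cons (fun a b hab => toHat_lt_iff.mpr (hg hab))
        (fun k => bot_lt_toHat _)
    · intro k
      induction k using Fin.cases with
      | zero => simp
      | succ k' => simpa [toHat_le_iff] using hgle k'
  -- depth lower bound
  have hdp_lb : (r - h) + 1 ≤ depthN (toHat x) := by
    have hDsub : insert x {z ∈ C i | x < z} ⊆ C i := by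
      rintro z (rfl | ⟨hz, -⟩)
      · exact hx
      · exact hz
    have hDchain : IsChain (· ≤ ·) (insert x {z ∈ C i | x < z}) := (hCmax i).1.mono hDsub
    have hDcard : (insert x {z ∈ C i | x < z}).ncard = (r - h) + 1 := by
      rw [Set.ncard_insert_of_notMem (fun hm => lt_irrefl _ hm.2) (Set.toFinite _), ha]
    obtain ⟨g, hg, hrange⟩ := enum_chain hDchain (Set.toFinite _) hDcard
    have hgge : ∀ k, x ≤ g k := by
      intro k
      have hm : g k ∈ insert x {z ∈ C i | x < z} := hrange ▸ Set.mem_range_self k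
      rcases hm with heq | ⟨-, hlt⟩
      · exact le_of_eq heq.symm
      · exact hlt.le
    refine le_csSup (bdd_of_exists (Q := Hat P) ?_) ⟨Fin.snoc (toHat ∘ g) ⊤, ?_, ?_⟩
    · rintro n ⟨f, hf, -⟩
      exact ⟨f, hf⟩
    · exact strictMono_fin_snoc (fun a b hab => toHat_lt_iff.mpr (hg hab))
        (fun k => toHat_lt_top _)
    · intro k
      rcases Fin.eq_castSucc_or_eq_last k with ⟨k', rfl⟩ | rfl
      · simpa [toHat_le_iff] using hgge k'
      · simp
  -- rank of Hat lower bound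
  have hr_lb : r + 2 ≤ rankN (Hat P) := by
    obtain ⟨g, hg, -⟩ := enum_chain (hCmax i).1 (Set.toFinite _) hnc
    refine le_csSup (bdd_of_exists (Q := Hat P) (fun n hn => hn)) ⟨Fin.cons ⊥ (Fin.snoc (toHat ∘ g) ⊤), ?_⟩
    apply strictMono_fin_cons
    · exact strictMono_fin_snoc (fun a b hab => toHat_lt_iff.mpr (hg hab))
        (fun k => toHat_lt_top _)
    · intro k
      rcases Fin.eq_castSucc_or_eq_last k with ⟨k', rfl⟩ | rfl
      · simpa using bot_lt_toHat (g k')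
      · simpa using lt_of_lt_of_le (bot_lt_toHat x) le_top
  -- rank of Hat upper bound
  have hr_ub : rankN (Hat P) ≤ r + 2 := by
    apply csSup_le'
    rintro n ⟨f, hf⟩
    rcases n with - | n
    · omega
    rcases n with - | m
    · omega
    have h1 : ∀ k : Fin (m + 1), f ⟨k.val + 1, by omega⟩ ≠ ⊥ := fun k =>
      ne_bot_of_gt (hf (show (0 : Fin (m + 3)) < ⟨k.val + 1, by omega⟩ by
        simp [Fin.lt_def]))
    have h2 : ∀ k : Fin (m + 1), f ⟨k.val + 1, by omega⟩ ≠ ⊤ := fun k =>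
      ne_top_of_lt (hf (show (⟨k.val + 1, by omega⟩ : Fin (m + 3)) < Fin.last (m + 2) by
        simp only [Fin.lt_def, Fin.val_last]; omega))
    obtain ⟨g, hg, -⟩ := extract_chain (fun k : Fin (m + 1) => f ⟨k.val + 1, by omega⟩)
      (fun a b hab => hf (by simp only [Fin.lt_def] at hab ⊢; omega)) h1 h2
    have h3 := key m g hg
    have h4 := hH_le (g (Fin.last m))
    omega
  -- height upper bound
  have hht_ub : heightN (toHat x) ≤ h + 1 := by
    apply csSup_le'
    rintro n ⟨f, hf, hfle⟩
    rcases n with - | m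
    · omega
    have hnt : ∀ k, f k ≠ ⊤ := fun k hk =>
      absurd (hfle k) (by rw [hk]; exact (toHat_lt_top x).not_ge)
    have hnb : ∀ k : Fin (m + 1), f k.succ ≠ ⊥ := fun k =>
      ne_bot_of_gt (hf (Fin.succ_pos k))
    obtain ⟨g, hg, hgf⟩ := extract_chain (fun k => f k.succ)
      (hf.comp Fin.strictMono_succ) hnb (fun k => hnt _)
    have hgle : ∀ k, g k ≤ x := fun k => toHat_le_iff.mp (by rw [hgf k]; exact hfle _)
    have hlast : H (g (Fin.last m)) ≤ h := by
      rcases lt_or_eq_of_le (hgle (Fin.last m)) with hlt | heq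
      · have h5 := hH_mono hlt
        omega
      · rw [heq]
        exact hxH.le
    have h3 := key m g hg
    omega
  -- depth upper bound
  have hdp_ub : depthN (toHat x) ≤ (r - h) + 1 := by
    apply csSup_le'
    rintro n ⟨f, hf, hfle⟩
    rcases n with - | m
    · omega
    have hnb : ∀ k, f k ≠ ⊥ := fun k hk =>
      absurd (hfle k) (by rw [hk]; exact (bot_lt_toHat x).not_ge)
    have hnt : ∀ k : Fin (m + 1), f k.castSucc ≠ ⊤ := fun k =>
      ne_top_of_lt (hf (Fin.castSucc_lt_last k))
    obtain ⟨g, hg, hgf⟩ := extract_chain (fun k => f k.castSucc)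
      (hf.comp Fin.strictMono_castSucc) (fun k => hnb _) hnt
    have hgge : ∀ k, x ≤ g k := fun k => toHat_le_iff.mp (by rw [hgf k]; exact hfle _)
    have h0 : h ≤ H (g 0) := by
      rcases lt_or_eq_of_le (hgge 0) with hlt | heq
      · have h5 := hH_mono hlt
        omega
      · rw [← heq]
        exact hxH.ge
    have h3 := key m g hg
    have h4 := hH_le (g (Fin.last m))
    omega
  have e1 : heightN (toHat x) = h + 1 := le_antisymm hht_ub hht_lb
  have e2 : depthN (toHat x) = (r - h) + 1 := le_antisymm hdp_ub hdp_lb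
  have e3 : rankN (Hat P) = r + 2 := le_antisymm hr_ub hr_lb
  rw [e1, e2, e3]
  omega
end
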